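/- arXiv:1706.02176 — 10 statements merged into one kernel-verified Lean document; each statement's English description precedes it below -/
import Mathlib

section
/- An operator α: V → P(V') is maximal monotone if and only if its Fitzpatrick function f_α satisfies: (i) f_α(v,v*) ≥ ⟨v*,v⟩ for all (v,v*) ∈ V × V', and (ii) f_α(v,v*) = ⟨v*,v⟩ if and only if v* ∈ α(v). -/
open Filter Topology

/-- A multivalued operator `α : V → 𝒫(V')` is monotone. -/
def MonotoneOp {V : Type*} [NormedAddCommGroup V] [NormedSpace ℝ V]
    (α : V → Set (StrongDual ℝ V)) : Prop :=
  ∀ v w v' w', v' ∈ α v → w' ∈ α w → 0 ≤ (v' - w') (v - w)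

/-- `α` is maximal monotone: it is monotone and its graph is maximal among graphs of
monotone operators. -/
def MaximalMonotoneOp {V : Type*} [NormedAddCommGroup V] [NormedSpace ℝ V]
    (α : V → Set (StrongDual ℝ V)) : Prop :=
  MonotoneOp α ∧
    ∀ β : V → Set (StrongDual ℝ V), MonotoneOp β → (∀ v, α v ⊆ β v) → ∀ v, β v = α v

private lemma fitz_term_eq {V : Type*} [NormedAddCommGroup V] [NormedSpace ℝ V]
    (p q : V × StrongDual ℝ V) :
    p.2 q.1 - q.2 (q.1 - p.1) = p.2 p.1 - (p.2 - q.2) (p.1 - q.1) := by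
  simp only [ContinuousLinearMap.sub_apply, map_sub]
  ring

/-- Fitzpatrick theorem: `α` is maximal monotone iff its Fitzpatrick
function `f_α` satisfies `f_α ≥ π` everywhere and `f_α = π` exactly on the graph of `α`. -/
theorem fitzpatrick_theorem
    (V : Type*) [NormedAddCommGroup V] [NormedSpace ℝ V]
    (α : V → Set (StrongDual ℝ V))
    (hne : ∃ p : V × StrongDual ℝ V, p.2 ∈ α p.1)
    (f : V × StrongDual ℝ V → EReal)
    (hf : ∀ p : V × StrongDual ℝ V,
      f p = ⨆ q : {q : V × StrongDual ℝ V // q.2 ∈ α q.1},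
        ((p.2 q.1.1 - q.1.2 (q.1.1 - p.1) : ℝ) : EReal)) :
    MaximalMonotoneOp α ↔
      ((∀ p : V × StrongDual ℝ V, ((p.2 p.1 : ℝ) : EReal) ≤ f p) ∧
       (∀ p : V × StrongDual ℝ V, f p = ((p.2 p.1 : ℝ) : EReal) ↔ p.2 ∈ α p.1)) := by
  constructor
  · rintro ⟨hmono, hmax⟩
    -- key: if p is not in the graph, there is q in the graph with ⟨p₂-q₂, p₁-q₁⟩ < 0
    have key : ∀ p : V × StrongDual ℝ V, p.2 ∉ α p.1 →
        ∃ q : V × StrongDual ℝ V, q.2 ∈ α q.1 ∧ (p.2 - q.2) (p.1 - q.1) < 0 := by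
      intro p hp
      by_contra h
      push_neg at h
      set β : V → Set (StrongDual ℝ V) :=
        fun v => α v ∪ {x | v = p.1 ∧ x = p.2} with hβ
      have hβmono : MonotoneOp β := by
        rintro v w v' w' (hv | ⟨rfl, rfl⟩) (hw | ⟨rfl, rfl⟩)
        · exact hmono v w v' w' hv hw
        · have h1 := h (v, v') hv
          have h2 : (v' - p.2) (v - p.1) = (p.2 - v') (p.1 - v) := by
            simp only [ContinuousLinearMap.sub_apply, map_sub]; ring
          simpa [h2] using h1
        · exact h (w, w') hw
        · simp
      have hall := hmax β hβmono (fun v => Set.subset_union_left) p.1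
      apply hp
      rw [← hall]
      exact Or.inr ⟨rfl, rfl⟩
    have hge : ∀ p : V × StrongDual ℝ V, ((p.2 p.1 : ℝ) : EReal) ≤ f p := by
      intro p
      rw [hf p]
      by_cases hp : p.2 ∈ α p.1
      · have := le_iSup (fun q : {q : V × StrongDual ℝ V // q.2 ∈ α q.1} =>
          ((p.2 q.1.1 - q.1.2 (q.1.1 - p.1) : ℝ) : EReal)) ⟨p, hp⟩
        simpa using this
      · obtain ⟨q, hq, hlt⟩ := key p hp
        have := le_iSup (fun q : {q : V × StrongDual ℝ V // q.2 ∈ α q.1} =>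
          ((p.2 q.1.1 - q.1.2 (q.1.1 - p.1) : ℝ) : EReal)) ⟨q, hq⟩
        refine le_trans ?_ this
        rw [EReal.coe_le_coe_iff, fitz_term_eq p q]
        linarith
    refine ⟨hge, fun p => ⟨?_, ?_⟩⟩
    · intro hfp
      by_contra hp
      obtain ⟨q, hq, hlt⟩ := key p hp
      have hle := le_iSup (fun q : {q : V × StrongDual ℝ V // q.2 ∈ α q.1} =>
          ((p.2 q.1.1 - q.1.2 (q.1.1 - p.1) : ℝ) : EReal)) ⟨q, hq⟩
      rw [← hf p, hfp, EReal.coe_le_coe_iff, fitz_term_eq p q] at hle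
      linarith
    · intro hp
      refine le_antisymm ?_ (hge p)
      rw [hf p]
      apply iSup_le
      rintro ⟨q, hq⟩
      rw [EReal.coe_le_coe_iff, fitz_term_eq p q]
      have := hmono p.1 q.1 p.2 q.2 hp hq
      linarith
  · rintro ⟨h1, h2⟩
    constructor
    · intro v w v' w' hv hw
      have hfv : f (v, v') = ((v' v : ℝ) : EReal) := (h2 (v, v')).mpr hv
      have hle := le_iSup (fun q : {q : V × StrongDual ℝ V // q.2 ∈ α q.1} =>
          (((v, v').2 q.1.1 - q.1.2 (q.1.1 - (v, v').1) : ℝ) : EReal)) ⟨(w, w'), hw⟩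
      rw [← hf (v, v'), hfv, EReal.coe_le_coe_iff] at hle
      have h3 : (v' - w') (v - w) = v' v - (v' w - w' (w - v)) := by
        simp only [ContinuousLinearMap.sub_apply, map_sub]; ring
      rw [h3]
      simpa using hle
    · intro β hβ hsub v
      refine Set.Subset.antisymm ?_ (hsub v)
      intro w' hw'
      have hle : f (v, w') ≤ (((v, w').2 (v, w').1 : ℝ) : EReal) := by
        rw [hf (v, w')]
        apply iSup_le
        rintro ⟨q, hq⟩
        rw [EReal.coe_le_coe_iff, fitz_term_eq (v, w') q]
        have := hβ v q.1 w' q.2 hw' (hsub q.1 hq)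
        linarith
      exact (h2 (v, w')).mp (le_antisymm hle (h1 (v, w')))
end

section
/- Any operator represented by a function f satisfying: f convex and lower semi-continuous on V × V', f(v,v*) ≥ ⟨v*,v⟩ everywhere, and f(v,v*) = ⟨v*,v⟩ ⟺ v* ∈ α(v), is monotone. -/
open Filter Topology

/-- any operator represented by a convex lower semi-continuous function
`f ≥ π` with `f = π` exactly on the graph is monotone. -/
theorem representable_implies_monotone
    (V : Type*) [NormedAddCommGroup V] [NormedSpace ℝ V]
    (α : V → Set (StrongDual ℝ V))
    (f : V × StrongDual ℝ V → EReal)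
    (hconv : ∀ p q : V × StrongDual ℝ V, ∀ t : ℝ, 0 ≤ t → t ≤ 1 →
      f (t • p + (1 - t) • q) ≤ (t : EReal) * f p + ((1 - t : ℝ) : EReal) * f q)
    (hlsc : LowerSemicontinuous f)
    (hge : ∀ p : V × StrongDual ℝ V, ((p.2 p.1 : ℝ) : EReal) ≤ f p)
    (hiff : ∀ p : V × StrongDual ℝ V, f p = ((p.2 p.1 : ℝ) : EReal) ↔ p.2 ∈ α p.1) :
    MonotoneOp α := by
  intro v w v' w' hv hw
  have hfv : f (v, v') = ((v' v : ℝ) : EReal) := (hiff (v, v')).mpr hv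
  have hfw : f (w, w') = ((w' w : ℝ) : EReal) := (hiff (w, w')).mpr hw
  have hc := hconv (v, v') (w, w') (1/2) (by norm_num) (by norm_num)
  set m : V × StrongDual ℝ V := (1/2 : ℝ) • (v, v') + (1 - 1/2 : ℝ) • (w, w') with hm
  have hgm := hge m
  have hchain : ((m.2 m.1 : ℝ) : EReal) ≤
      (((1/2 : ℝ) * v' v + (1/2 : ℝ) * w' w : ℝ) : EReal) := by
    refine le_trans hgm (le_trans hc ?_)
    rw [hfv, hfw]
    rw [show (((1/2 : ℝ) * v' v + (1/2 : ℝ) * w' w : ℝ) : EReal)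
        = ((1/2 : ℝ) : EReal) * ((v' v : ℝ) : EReal)
          + ((1/2 : ℝ) : EReal) * ((w' w : ℝ) : EReal) by
      rw [← EReal.coe_mul, ← EReal.coe_mul, ← EReal.coe_add]]
    norm_num
  have hreal : (m.2 m.1 : ℝ) ≤ (1/2 : ℝ) * v' v + (1/2 : ℝ) * w' w :=
    EReal.coe_le_coe_iff.mp hchain
  have hm2 : m.2 m.1 = (1/2 : ℝ) * ((1/2 : ℝ) * (v' v + v' w + w' v + w' w)) := by
    simp only [hm, Prod.smul_fst, Prod.smul_snd, Prod.fst_add, Prod.snd_add,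
      ContinuousLinearMap.add_apply, ContinuousLinearMap.smul_apply, map_add, map_smul,
      smul_eq_mul]
    ring
  rw [hm2] at hreal
  have : (v' - w') (v - w) = v' v - v' w - w' v + w' w := by
    simp [ContinuousLinearMap.sub_apply, map_sub]; ring
  rw [this]
  linarith
end

section
/- If f is the Fitzpatrick function of a maximal monotone operator α: V → P(V') on a reflexive Banach space V, and g is any other convex lower semi-continuous function with g ≥ π on V × V' and g = π exactly on the graph of α, then f ≤ g on V × V'. -/
open Filter Topology

/-- Key real limit lemma for the Fitzpatrick minimality argument. -/
lemma fitzpatrick_key (c yy yx xy xx : ℝ)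
    (H : ∀ t : ℝ, 0 < t → t ≤ 1 →
      t^2*yy + t*(1-t)*(yx+xy) + (1-t)^2*xx ≤ t*c + (1-t)*xx) :
    yx + xy - xx ≤ c := by
  have hstep : ∀ t : ℝ, 0 < t → t ≤ 1 →
      t*yy + (1-t)*(yx+xy) + (t-1)*xx ≤ c := by
    intro t ht0 ht1
    have h2 : t * (t*yy + (1-t)*(yx+xy) + (t-1)*xx) ≤ t * c := by
      nlinarith [H t ht0 ht1]
    exact le_of_mul_le_mul_left h2 ht0
  have hcont : Continuous fun t : ℝ => t*yy + (1-t)*(yx+xy) + (t-1)*xx := by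
    continuity
  have htend : Tendsto (fun t : ℝ => t*yy + (1-t)*(yx+xy) + (t-1)*xx)
      (𝓝[>] (0:ℝ)) (𝓝 (yx + xy - xx)) := by
    have := (hcont.tendsto 0).mono_left (nhdsWithin_le_nhds (s := Set.Ioi (0:ℝ)))
    simpa [sub_eq_add_neg] using this
  refine le_of_tendsto htend ?_
  filter_upwards [Ioc_mem_nhdsGT_of_mem (Set.mem_Ico.mpr ⟨le_refl 0, zero_lt_one⟩)]
    with t ht
  exact hstep t ht.1 ht.2

/-- the Fitzpatrick function of a maximal monotone operator `α` on a
reflexive Banach space is the smallest representative function of `α`. -/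
theorem fitzpatrick_function_minimal
    (V : Type*) [NormedAddCommGroup V] [NormedSpace ℝ V] [CompleteSpace V]
    (hrefl : Function.Surjective (NormedSpace.inclusionInDoubleDual ℝ V))
    (α : V → Set (StrongDual ℝ V))
    (hmax : MaximalMonotoneOp α)
    (hne : ∃ p : V × StrongDual ℝ V, p.2 ∈ α p.1)
    (f : V × StrongDual ℝ V → EReal)
    (hf : ∀ p : V × StrongDual ℝ V,
      f p = ⨆ q : {q : V × StrongDual ℝ V // q.2 ∈ α q.1},
        ((p.2 q.1.1 - q.1.2 (q.1.1 - p.1) : ℝ) : EReal))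
    (g : V × StrongDual ℝ V → EReal)
    (hgconv : ∀ p q : V × StrongDual ℝ V, ∀ t : ℝ, 0 ≤ t → t ≤ 1 →
      g (t • p + (1 - t) • q) ≤ (t : EReal) * g p + ((1 - t : ℝ) : EReal) * g q)
    (hglsc : LowerSemicontinuous g)
    (hgge : ∀ p : V × StrongDual ℝ V, ((p.2 p.1 : ℝ) : EReal) ≤ g p)
    (hgiff : ∀ p : V × StrongDual ℝ V, g p = ((p.2 p.1 : ℝ) : EReal) ↔ p.2 ∈ α p.1) :
    ∀ p : V × StrongDual ℝ V, f p ≤ g p := by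
  intro p
  rw [hf p]
  refine iSup_le ?_
  rintro ⟨q, hq⟩
  rcases eq_top_or_lt_top (g p) with htop | hlt
  · rw [htop]; exact le_top
  · have hbot : g p ≠ ⊥ := (lt_of_lt_of_le (EReal.bot_lt_coe _) (hgge p)).ne'
    lift g p to ℝ using ⟨hlt.ne, hbot⟩ with c hc
    have hgq : g q = ((q.2 q.1 : ℝ) : EReal) := (hgiff q).mpr hq
    -- real inequality for each t ∈ (0,1]
    have H : ∀ t : ℝ, 0 < t → t ≤ 1 →
        t^2*(p.2 p.1) + t*(1-t)*(p.2 q.1 + q.2 p.1) + (1-t)^2*(q.2 q.1)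
          ≤ t*c + (1-t)*(q.2 q.1) := by
      intro t ht0 ht1
      have hcvx := hgconv p q t ht0.le ht1
      rw [← hc, hgq] at hcvx
      have hπ := hgge (t • p + (1 - t) • q)
      have hle := le_trans hπ hcvx
      have hcombo : ((t • p + (1 - t) • q).2) ((t • p + (1 - t) • q).1)
          = t^2*(p.2 p.1) + t*(1-t)*(p.2 q.1 + q.2 p.1) + (1-t)^2*(q.2 q.1) := by
        simp [Prod.smul_fst, Prod.smul_snd, ContinuousLinearMap.add_apply,
          ContinuousLinearMap.smul_apply, map_add, map_smul, smul_eq_mul]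
        ring
      rw [hcombo] at hle
      have : ((t^2*(p.2 p.1) + t*(1-t)*(p.2 q.1 + q.2 p.1) + (1-t)^2*(q.2 q.1) : ℝ) : EReal)
          ≤ ((t*c + (1-t)*(q.2 q.1) : ℝ) : EReal) := by
        refine le_trans hle ?_
        rw [EReal.coe_add, EReal.coe_mul, EReal.coe_mul]
      exact_mod_cast this
    have hkey := fitzpatrick_key c (p.2 p.1) (p.2 q.1) (q.2 p.1) (q.2 q.1) H
    have : (p.2 q.1 - q.2 (q.1 - p.1) : ℝ) ≤ c := by
      have : (p.2 q.1 - q.2 (q.1 - p.1) : ℝ) = p.2 q.1 + q.2 p.1 - q.2 q.1 := by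
        simp [map_sub]; ring
      linarith [hkey, this.le]
    exact_mod_cast this
end

section
/- Let f weakly represent an operator α: V → P(V') and let L ∈ L(V;V') be a positive (i.e. ⟨Lv,v⟩ ≥ 0) bounded linear operator. Then g₁(v,v*) := f(v, v* - Lv) + ⟨Lv, v⟩ weakly represents the operator α + L. Moreover, if f is convex then g₁ is convex. -/
open Filter Topology

/-- Weak convergence of a sequence in `V`. -/
def WeakConvSeq {V : Type*} [NormedAddCommGroup V] [NormedSpace ℝ V]
    (v : ℕ → V) (v0 : V) : Prop :=
  ∀ φ : StrongDual ℝ V, Tendsto (fun n => φ (v n)) atTop (𝓝 (φ v0))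

/-- Weak convergence of a sequence in `V'` (weak star, which agrees with the weak
topology on the dual of a reflexive space). -/
def WeakStarConvSeq {V : Type*} [NormedAddCommGroup V] [NormedSpace ℝ V]
    (f : ℕ → StrongDual ℝ V) (f0 : StrongDual ℝ V) : Prop :=
  ∀ w : V, Tendsto (fun n => f n w) atTop (𝓝 (f0 w))

/-- Sequential lower semicontinuity w.r.t. the weak topology of `V × V'`. -/
def WeakSeqLSC {V : Type*} [NormedAddCommGroup V] [NormedSpace ℝ V]
    (f : V × StrongDual ℝ V → EReal) : Prop :=
  ∀ (v : ℕ → V) (vs : ℕ → StrongDual ℝ V) (v0 : V) (vs0 : StrongDual ℝ V),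
    WeakConvSeq v v0 → WeakStarConvSeq vs vs0 →
    f (v0, vs0) ≤ liminf (fun n => f (v n, vs n)) atTop

private lemma aux_mul_ne_bot (c : ℝ) (hc : 0 ≤ c) (x : EReal) (hx : x ≠ ⊥) :
    (c : EReal) * x ≠ ⊥ := by
  rcases eq_or_lt_of_le hc with h | h
  · rw [← h]; simp
  · induction x with
    | bot => exact absurd rfl hx
    | coe r => rw [← EReal.coe_mul]; exact EReal.coe_ne_bot _
    | top => rw [EReal.coe_mul_top_of_pos h]; simp

private lemma aux_exists_real (x : EReal) (h1 : x ≠ ⊥) (h2 : x ≠ ⊤) : ∃ r : ℝ, x = (r : EReal) := by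
  induction x with
  | bot => exact absurd rfl h1
  | coe r => exact ⟨r, rfl⟩
  | top => exact absurd rfl h2

set_option maxHeartbeats 1000000 in
/-- if `f` weakly represents `α` and `L` is a positive bounded linear
operator, then `g₁(v,v*) = f(v, v* - Lv) + ⟨Lv,v⟩` weakly represents `α + L`;
moreover `g₁` is convex if `f` is. -/
theorem representation_sum_linear
    (V : Type*) [NormedAddCommGroup V] [NormedSpace ℝ V] [CompleteSpace V]
    (hrefl : Function.Surjective (NormedSpace.inclusionInDoubleDual ℝ V))
    (α : V → Set (StrongDual ℝ V))
    (f : V × StrongDual ℝ V → EReal)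
    (hflsc : WeakSeqLSC f)
    (hfge : ∀ p : V × StrongDual ℝ V, ((p.2 p.1 : ℝ) : EReal) ≤ f p)
    (hfiff : ∀ p : V × StrongDual ℝ V, f p = ((p.2 p.1 : ℝ) : EReal) ↔ p.2 ∈ α p.1)
    (L : V →L[ℝ] StrongDual ℝ V)
    (hLpos : ∀ v : V, 0 ≤ L v v)
    (g₁ : V × StrongDual ℝ V → EReal)
    (hg₁ : ∀ p : V × StrongDual ℝ V,
      g₁ p = f (p.1, p.2 - L p.1) + ((L p.1 p.1 : ℝ) : EReal)) :
    WeakSeqLSC g₁ ∧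
    (∀ p : V × StrongDual ℝ V, ((p.2 p.1 : ℝ) : EReal) ≤ g₁ p) ∧
    (∀ p : V × StrongDual ℝ V,
      g₁ p = ((p.2 p.1 : ℝ) : EReal) ↔ ∃ u ∈ α p.1, p.2 = u + L p.1) ∧
    ((∀ p q : V × StrongDual ℝ V, ∀ t : ℝ, 0 ≤ t → t ≤ 1 →
        f (t • p + (1 - t) • q) ≤ (t : EReal) * f p + ((1 - t : ℝ) : EReal) * f q) →
      (∀ p q : V × StrongDual ℝ V, ∀ t : ℝ, 0 ≤ t → t ≤ 1 →
        g₁ (t • p + (1 - t) • q) ≤ (t : EReal) * g₁ p + ((1 - t : ℝ) : EReal) * g₁ q)) := by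
  -- f is never ⊥
  have hfbot : ∀ p : V × StrongDual ℝ V, f p ≠ ⊥ := fun p =>
    ((EReal.bot_lt_coe _).trans_le (hfge p)).ne'
  -- part 2 first (reused later)
  have hge₁ : ∀ p : V × StrongDual ℝ V, ((p.2 p.1 : ℝ) : EReal) ≤ g₁ p := by
    intro p
    rw [hg₁]
    have h := hfge (p.1, p.2 - L p.1)
    have key : ((p.2 p.1 : ℝ) : EReal)
        = (((p.2 - L p.1) p.1 : ℝ) : EReal) + ((L p.1 p.1 : ℝ) : EReal) := by
      rw [← EReal.coe_add]
      norm_cast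
      simp [ContinuousLinearMap.sub_apply]
    rw [key]
    exact add_le_add_left h _
  have hg₁bot : ∀ p : V × StrongDual ℝ V, g₁ p ≠ ⊥ := fun p =>
    ((EReal.bot_lt_coe _).trans_le (hge₁ p)).ne'
  refine ⟨?_, hge₁, ?_, ?_⟩
  · -- LSC
    intro v vs v0 vs0 hv hvs
    have hvs' : WeakStarConvSeq (fun n => vs n - L (v n)) (vs0 - L v0) := by
      intro w
      have h1 := hvs w
      have h2 : Tendsto (fun n => L (v n) w) atTop (𝓝 (L v0 w)) := hv (L.flip w)
      simpa [ContinuousLinearMap.sub_apply] using h1.sub h2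
    have hf := hflsc v (fun n => vs n - L (v n)) v0 (vs0 - L v0) hv hvs'
    have hr : Tendsto (fun n => L (v n) v0 + L v0 (v n) - L v0 v0) atTop (𝓝 (L v0 v0)) := by
      have h1 : Tendsto (fun n => L (v n) v0) atTop (𝓝 (L v0 v0)) := hv (L.flip v0)
      have h2 : Tendsto (fun n => L v0 (v n)) atTop (𝓝 (L v0 v0)) := hv (L v0)
      have h3 := (h1.add h2).sub_const (L v0 v0)
      simpa using h3
    have hQ : ((L v0 v0 : ℝ) : EReal)
        ≤ liminf (fun n => ((L (v n) (v n) : ℝ) : EReal)) atTop := by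
      have hle : ∀ n, ((L (v n) v0 + L v0 (v n) - L v0 v0 : ℝ) : EReal)
          ≤ ((L (v n) (v n) : ℝ) : EReal) := by
        intro n
        have h0 := hLpos (v n - v0)
        simp only [map_sub, ContinuousLinearMap.sub_apply] at h0
        exact EReal.coe_le_coe_iff.2 (by linarith)
      calc ((L v0 v0 : ℝ) : EReal)
          = liminf (fun n => ((L (v n) v0 + L v0 (v n) - L v0 v0 : ℝ) : EReal)) atTop :=
            (Tendsto.liminf_eq (continuous_coe_real_ereal.continuousAt.tendsto.comp hr)).symm
        _ ≤ _ := liminf_le_liminf (Eventually.of_forall hle)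
    rw [hg₁]
    calc f (v0, vs0 - L v0) + ((L v0 v0 : ℝ) : EReal)
        ≤ liminf (fun n => f (v n, vs n - L (v n))) atTop
            + liminf (fun n => ((L (v n) (v n) : ℝ) : EReal)) atTop := add_le_add hf hQ
      _ ≤ liminf ((fun n => f (v n, vs n - L (v n)))
            + (fun n => ((L (v n) (v n) : ℝ) : EReal))) atTop := EReal.le_liminf_add
      _ = liminf (fun n => g₁ (v n, vs n)) atTop := by
          congr 1
          funext n
          simp only [Pi.add_apply]
          exact (hg₁ (v n, vs n)).symm
  · -- equality characterization
    intro p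
    rw [hg₁]
    have hsub : ((p.2 - L p.1) p.1 : ℝ) = p.2 p.1 - L p.1 p.1 := by
      simp [ContinuousLinearMap.sub_apply]
    constructor
    · intro h
      have hf' : f (p.1, p.2 - L p.1) = (((p.2 - L p.1) p.1 : ℝ) : EReal) := by
        have h2 : f (p.1, p.2 - L p.1)
            = ((p.2 p.1 : ℝ) : EReal) - ((L p.1 p.1 : ℝ) : EReal) := by
          rw [← h]; exact EReal.add_sub_cancel_right.symm
        rw [h2, ← EReal.coe_sub, hsub]
      have hmem : p.2 - L p.1 ∈ α p.1 := (hfiff (p.1, p.2 - L p.1)).1 hf'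
      exact ⟨p.2 - L p.1, hmem, by abel⟩
    · rintro ⟨u, hu, hpu⟩
      have heq : p.2 - L p.1 = u := by rw [hpu]; abel
      have hfval := (hfiff (p.1, p.2 - L p.1)).2 (heq ▸ hu)
      rw [hfval, hsub, ← EReal.coe_add, sub_add_cancel]
  · -- convexity
    intro hconv p q t ht0 ht1
    set a := p.1 with ha
    set b := q.1 with hb
    have h1t : (0:ℝ) ≤ 1 - t := by linarith
    -- quadratic inequality
    have h0 := hLpos (a - b)
    have hexp : L (a - b) (a - b) = L a a - L a b - L b a + L b b := by
      simp only [map_sub, ContinuousLinearMap.sub_apply]; ring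
    rw [hexp] at h0
    have hL : L (t • a + (1 - t) • b) (t • a + (1 - t) • b)
        = t * t * L a a + t * (1 - t) * L a b + (1 - t) * t * L b a
          + (1 - t) * (1 - t) * L b b := by
      simp only [map_add, map_smul, ContinuousLinearMap.add_apply,
        ContinuousLinearMap.smul_apply, smul_eq_mul]
      ring
    have hquad : L (t • a + (1 - t) • b) (t • a + (1 - t) • b)
        ≤ t * L a a + (1 - t) * L b b := by
      rw [hL]
      nlinarith [mul_nonneg (mul_nonneg ht0 h1t) h0]
    -- the affine identity
    set p' : V × StrongDual ℝ V := (a, p.2 - L a) with hp'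
    set q' : V × StrongDual ℝ V := (b, q.2 - L b) with hq'
    have hfst : (t • p + (1 - t) • q).1 = t • a + (1 - t) • b := rfl
    have hkey : ((t • p + (1 - t) • q).1,
        (t • p + (1 - t) • q).2 - L (t • p + (1 - t) • q).1) = t • p' + (1 - t) • q' := by
      refine Prod.ext rfl ?_
      show t • p.2 + (1 - t) • q.2 - L (t • a + (1 - t) • b)
        = t • (p.2 - L a) + (1 - t) • (q.2 - L b)
      simp only [map_add, map_smul, smul_sub]
      abel
    have hcv := hconv p' q' t ht0 ht1
    have hg₁p : g₁ p = f p' + ((L a a : ℝ) : EReal) := hg₁ p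
    have hg₁q : g₁ q = f q' + ((L b b : ℝ) : EReal) := hg₁ q
    rw [hg₁ (t • p + (1 - t) • q), hg₁p, hg₁q, hkey, hfst]
    -- case analysis on f p' and f q'
    by_cases hp : f p' = ⊤
    · rcases eq_or_lt_of_le ht0 with h | h
      · -- t = 0
        rw [← h]
        simp only [zero_smul, sub_zero, one_smul, zero_add, EReal.coe_zero, zero_mul,
          EReal.coe_one, one_mul]
        exact le_rfl
      · have htop : (t : EReal) * (f p' + ((L a a : ℝ) : EReal)) = ⊤ := by
          rw [hp, EReal.top_add_of_ne_bot (EReal.coe_ne_bot _), EReal.coe_mul_top_of_pos h]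
        rw [htop, EReal.top_add_of_ne_bot]
        · exact le_top
        · exact aux_mul_ne_bot (1 - t) h1t _ (by rw [← hg₁q]; exact hg₁bot q)
    · by_cases hq'' : f q' = ⊤
      · rcases eq_or_lt_of_le ht1 with h | h
        · -- t = 1
          rw [h]
          simp only [sub_self, one_smul, zero_smul, add_zero, EReal.coe_zero, zero_mul,
            EReal.coe_one, one_mul]
          exact le_rfl
        · have h1t' : (0:ℝ) < 1 - t := by linarith
          have htop : ((1 - t : ℝ) : EReal) * (f q' + ((L b b : ℝ) : EReal)) = ⊤ := by
            rw [hq'', EReal.top_add_of_ne_bot (EReal.coe_ne_bot _),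
              EReal.coe_mul_top_of_pos h1t']
          rw [htop, EReal.add_top_of_ne_bot]
          · exact le_top
          · exact aux_mul_ne_bot t ht0 _ (by rw [← hg₁p]; exact hg₁bot p)
      · -- both finite
        obtain ⟨A, hA⟩ := aux_exists_real (f p') (hfbot p') hp
        obtain ⟨B, hB⟩ := aux_exists_real (f q') (hfbot q') hq''
        rw [hA, hB] at hcv
        have h1 : f (t • p' + (1 - t) • q') ≤ ((t * A + (1 - t) * B : ℝ) : EReal) := by
          rw [EReal.coe_add, EReal.coe_mul, EReal.coe_mul]; exact hcv
        have h2 := add_le_add h1 (EReal.coe_le_coe_iff.2 hquad)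
        rw [← EReal.coe_add] at h2
        refine le_trans h2 ?_
        rw [hA, hB, ← EReal.coe_add, ← EReal.coe_add, ← EReal.coe_mul, ← EReal.coe_mul,
          ← EReal.coe_add]
        exact EReal.coe_le_coe_iff.2 (le_of_eq (by ring))
end

section
/- Let X be a Hausdorff topological space, Y a reflexive Banach space with weak topology, and φ: X × Y → ℝ ∪ {+∞} lower semi-continuous. If inf_{x ∈ X} φ(x,y) → +∞ as ‖y‖_Y → +∞, then the function x ↦ inf_{y ∈ Y} φ(x,y) is lower semi-continuous on X. -/
open Filter Topology

/-- The weak topology on a normed space `Y`: the topology induced by all continuous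
linear functionals. -/
def weakTopology (Y : Type*) [NormedAddCommGroup Y] [NormedSpace ℝ Y] :
    TopologicalSpace Y :=
  TopologicalSpace.induced (fun (y : Y) (φ : StrongDual ℝ Y) => φ y) Pi.topologicalSpace

/-- In a reflexive Banach space, closed balls are compact in the weak topology. -/
lemma weak_isCompact_closedBall (Y : Type*) [NormedAddCommGroup Y] [NormedSpace ℝ Y]
    (hrefl : Function.Surjective (NormedSpace.inclusionInDoubleDual ℝ Y)) (r : ℝ) :
    @IsCompact Y (weakTopology Y) (Metric.closedBall (0 : Y) r) := by
  classical
  set E := StrongDual ℝ Y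
  let J : Y → WeakDual ℝ E := fun y => NormedSpace.inclusionInDoubleDual ℝ Y y
  -- the weak topology is induced by `J`
  have htop : weakTopology Y = TopologicalSpace.induced J inferInstance := by
    show _ = TopologicalSpace.induced J
      (TopologicalSpace.induced
        (fun (g : WeakDual ℝ E) (x' : E) => topDualPairing ℝ E g x') Pi.topologicalSpace)
    rw [induced_compose]
    rfl
  have hJnorm : ∀ y : Y, ‖WeakDual.toStrongDual (J y)‖ = ‖y‖ := fun y =>
    (NormedSpace.inclusionInDoubleDualLi ℝ (E := Y)).norm_map y
  have hJinj : Function.Injective J := fun a b hab =>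
    (NormedSpace.inclusionInDoubleDualLi ℝ (E := Y)).injective hab
  -- image of the ball
  have himg : J '' Metric.closedBall (0 : Y) r
      = WeakDual.toStrongDual ⁻¹' Metric.closedBall (0 : E →L[ℝ] ℝ) r := by
    ext g
    constructor
    · rintro ⟨y, hy, rfl⟩
      simp only [Set.mem_preimage, Metric.mem_closedBall, dist_zero_right] at *
      exact (dist_zero_right (WeakDual.toStrongDual (J y) : StrongDual ℝ E)).trans_le ((hJnorm y).trans_le hy)
    · intro hg
      obtain ⟨y, hy⟩ := hrefl g
      refine ⟨y, ?_, hy⟩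
      simp only [Set.mem_preimage, Metric.mem_closedBall, dist_zero_right] at *
      calc ‖y‖ = ‖WeakDual.toStrongDual (J y)‖ := (hJnorm y).symm
        _ = ‖WeakDual.toStrongDual g‖ := by rw [show J y = g from hy]
        _ ≤ r := (dist_zero_right (WeakDual.toStrongDual g : StrongDual ℝ E)).symm.trans_le hg
  have hcomp : IsCompact (J '' Metric.closedBall (0 : Y) r) := by
    rw [himg]
    exact WeakDual.isCompact_closedBall (𝕜 := ℝ) (E := E) 0 r
  rw [htop]
  exact (@Topology.IsEmbedding.isCompact_iff Y (WeakDual ℝ E)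
    (TopologicalSpace.induced J inferInstance) _ _ J
    (Function.Injective.isEmbedding_induced hJinj)).mpr hcomp

/-- if `X` is Hausdorff, `Y` is a reflexive Banach space with its weak
topology, `φ : X × Y → ℝ ∪ {+∞}` is lower semi-continuous and
`inf_x φ(x,y) → +∞` as `‖y‖ → ∞`, then `x ↦ inf_y φ(x,y)` is lower semi-continuous. -/
theorem lsc_of_inf_coercive
    (X : Type*) [TopologicalSpace X] [T2Space X]
    (Y : Type*) [NormedAddCommGroup Y] [NormedSpace ℝ Y] [CompleteSpace Y]
    (hrefl : Function.Surjective (NormedSpace.inclusionInDoubleDual ℝ Y))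
    (φ : X × Y → EReal)
    (hlsc : @LowerSemicontinuous (X × Y) EReal
      (@instTopologicalSpaceProd X Y _ (weakTopology Y)) _ φ)
    (hcoer : ∀ C : ℝ, ∃ R : ℝ, ∀ y : Y, R < ‖y‖ → ∀ x : X, (C : EReal) ≤ φ (x, y)) :
    LowerSemicontinuous (fun x : X => ⨅ y : Y, φ (x, y)) := by
  classical
  intro x₀ c hc
  -- pick a real `C` strictly between `c` and the infimum at `x₀`
  obtain ⟨C, hcC, hCinf⟩ : ∃ C : ℝ, c < (C : EReal) ∧ (C : EReal) < ⨅ y : Y, φ (x₀, y) := by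
    obtain ⟨z, hz1, hz2⟩ := exists_between hc
    lift z to ℝ using ⟨hz2.ne_top, fun h => by simp [h] at hz1⟩
    exact ⟨z, hz1, hz2⟩
  -- it suffices to get `C ≤ inf` eventually
  suffices hS : ∀ᶠ x in 𝓝 x₀, (C : EReal) ≤ ⨅ y : Y, φ (x, y) by
    filter_upwards [hS] with x hx using lt_of_lt_of_le hcC hx
  by_contra hcon
  -- the set where the infimum is below `C` clusters at `x₀`
  set A : Set X := {x | ⨅ y : Y, φ (x, y) < (C : EReal)} with hA
  have hFne : Filter.NeBot (𝓝 x₀ ⊓ Filter.principal A) := by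
    rw [Filter.inf_principal_neBot_iff]
    intro U hU
    rcases Filter.frequently_iff.mp (Filter.not_eventually.mp hcon) hU with ⟨x, hxU, hx⟩
    exact ⟨x, hxU, not_le.mp hx⟩
  set F : Filter X := 𝓝 x₀ ⊓ Filter.principal A
  obtain ⟨R, hR⟩ := hcoer C
  -- choice of approximate minimizers
  let yf : X → Y := fun x => if h : ∃ y : Y, φ (x, y) < (C : EReal) then h.choose else 0
  have hyf : ∀ x ∈ A, φ (x, yf x) < (C : EReal) := by
    intro x hx
    have h : ∃ y : Y, φ (x, y) < (C : EReal) := iInf_lt_iff.mp hx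
    simpa only [yf, dif_pos h] using h.choose_spec
  have hyfball : ∀ x ∈ A, yf x ∈ Metric.closedBall (0 : Y) R := by
    intro x hx
    simp only [Metric.mem_closedBall, dist_zero_right]
    by_contra hnorm
    exact absurd (hR (yf x) (not_le.mp hnorm) x) (not_le.mpr (hyf x hx))
  -- take an ultrafilter finer than `F`
  let U : Ultrafilter X := @Ultrafilter.of X F hFne
  have hUF : (U : Filter X) ≤ F := Ultrafilter.of_le F
  have hUA : A ∈ U := hUF (Filter.mem_inf_of_right (Filter.mem_principal_self A))
  have hUx₀ : (U : Filter X) ≤ 𝓝 x₀ := hUF.trans inf_le_left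
  -- the minimizers stay in a weakly compact ball, hence converge along `U`
  have hK : @IsCompact Y (weakTopology Y) (Metric.closedBall (0 : Y) R) :=
    weak_isCompact_closedBall Y hrefl R
  have hVle : (Ultrafilter.map yf U : Filter Y) ≤ Filter.principal (Metric.closedBall (0 : Y) R) :=
    Filter.le_principal_iff.mpr (Filter.mem_map.mpr (Filter.mem_of_superset hUA hyfball))
  obtain ⟨y₀, hy₀K, hy₀⟩ := @IsCompact.ultrafilter_le_nhds Y (weakTopology Y) _ hK
    (Ultrafilter.map yf U) hVle
  -- the pairs `(x, yf x)` converge to `(x₀, y₀)` in the product topology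
  have hpair : Filter.Tendsto (fun x => (x, yf x)) (U : Filter X)
      (@nhds (X × Y) (@instTopologicalSpaceProd X Y _ (weakTopology Y)) (x₀, y₀)) := by
    rw [@nhds_prod_eq X Y _ (weakTopology Y) x₀ y₀]
    exact Filter.Tendsto.prodMk hUx₀ hy₀
  -- lower semicontinuity at `(x₀, y₀)` gives a contradiction
  have hφy₀ : (C : EReal) < φ (x₀, y₀) := lt_of_lt_of_le hCinf (iInf_le _ y₀)
  have hev := hlsc (x₀, y₀) (C : EReal) hφy₀
  have hev' : ∀ᶠ x in (U : Filter X), (C : EReal) < φ (x, yf x) := hpair.eventually hev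
  have hev'' : ∀ᶠ x in (U : Filter X), φ (x, yf x) < (C : EReal) :=
    Filter.eventually_of_mem hUA (fun x hx => hyf x hx)
  obtain ⟨x, hx1, hx2⟩ := (hev'.and hev'').exists
  exact absurd hx2 (not_lt.mpr hx1.le)
end

section
/- Let V be reflexive, α₁, α₂: V → P(V') with a common point ṽ where both are nonempty, and gᵢ weakly representing αᵢ (i = 1,2). If inf_{(v,v*)} {g₁(v, v* - z*) + g₂(v, z*)} → +∞ as ‖z*‖_{V'} → +∞, then the partial inf-convolution (g₁ ⊕ g₂)(v,v*) := inf_{z* ∈ V'} {g₁(v, v* - z*) + g₂(v, z*)} is weakly lower semi-continuous, satisfies g₁ ⊕ g₂ ≥ π, and represents the sum operator α₁ + α₂. If moreover g₁ and g₂ are convex, then g₁ ⊕ g₂ is convex. -/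
set_option maxHeartbeats 1000000

open Function TopologicalSpace NormedSpace


open Filter Topology

section AuxiliaryLemmas

lemma aux_sep_vanish {X : Type*} [NormedAddCommGroup X] [NormedSpace ℝ X]
    (Y : Submodule ℝ X) (hY : IsClosed (Y : Set X)) {x : X} (hx : x ∉ Y) :
    ∃ f : X →L[ℝ] ℝ, (∀ y ∈ Y, f y = 0) ∧ f x ≠ 0 := by
  obtain ⟨f, u, hfY, hux⟩ := geometric_hahn_banach_closed_point (Y.convex) hY hx
  have h0 : (0 : X) ∈ Y := Y.zero_mem
  have hu0 : (0:ℝ) < u := by simpa using hfY 0 h0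
  refine ⟨f, fun y hy => ?_, ?_⟩
  · by_contra hne
    have hscale : ∀ t : ℝ, t * f y < u := by
      intro t
      have := hfY (t • y) (Y.smul_mem t hy)
      simpa using this
    rcases lt_or_gt_of_ne hne with h | h
    · have := hscale ((u+1)/(f y))
      rw [div_mul_cancel₀ _ (ne_of_lt h)] at this
      linarith
    · have := hscale ((u+1)/(f y))
      rw [div_mul_cancel₀ _ (ne_of_gt h)] at this
      linarith
  · exact ne_of_gt (hu0.trans hux)

lemma aux_dual_refl (V : Type*) [NormedAddCommGroup V] [NormedSpace ℝ V]
    (h : Surjective (inclusionInDoubleDual ℝ V)) :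
    Surjective (inclusionInDoubleDual ℝ (StrongDual ℝ V)) := by
  intro Ψ
  refine ⟨Ψ.comp (inclusionInDoubleDual ℝ V), ?_⟩
  ext Φ
  obtain ⟨x, rfl⟩ := h Φ
  simp [NormedSpace.dual_def]

lemma aux_subspace_refl {X : Type*} [NormedAddCommGroup X] [NormedSpace ℝ X]
    (h : Surjective (inclusionInDoubleDual ℝ X)) (Y : Submodule ℝ X)
    (hY : IsClosed (Y : Set X)) :
    Surjective (inclusionInDoubleDual ℝ Y) := by
  intro Φ
  set r : StrongDual ℝ X →L[ℝ] StrongDual ℝ Y := (ContinuousLinearMap.compL ℝ Y X ℝ).flip Y.subtypeL with hr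
  have hrapp : ∀ (f : StrongDual ℝ X) (y : Y), r f y = f y := by intro f y; simp [hr]
  obtain ⟨x, hx⟩ := h (Φ.comp r)
  have hxY : x ∈ Y := by
    by_contra hxY
    obtain ⟨f, hfY, hfx⟩ := aux_sep_vanish Y hY hxY
    have h1 : f x = Φ.comp r f := by
      have := congrArg (fun Ψ => Ψ f) hx
      simpa [NormedSpace.dual_def] using this
    have h2 : r f = 0 := by
      ext y; simpa [hrapp] using hfY y y.2
    rw [ContinuousLinearMap.comp_apply, h2, map_zero] at h1
    exact hfx h1
  refine ⟨⟨x, hxY⟩, ?_⟩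
  ext g
  obtain ⟨G, hG, -⟩ := exists_extension_norm_eq Y g
  have h1 : r G = g := by ext y; simp [hrapp, hG y]
  have h2 : G x = Φ.comp r G := by
    have := congrArg (fun Ψ => Ψ G) hx
    simpa [NormedSpace.dual_def] using this
  rw [ContinuousLinearMap.comp_apply, h1] at h2
  have h3 := hG ⟨x, hxY⟩
  simp only [NormedSpace.dual_def]
  rw [← h2, ← h3]

lemma aux_sep_of_dual_sep (Z : Type*) [NormedAddCommGroup Z] [NormedSpace ℝ Z]
    [SeparableSpace (StrongDual ℝ Z)] : SeparableSpace Z := by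
  set f : ℕ → StrongDual ℝ Z := denseSeq (StrongDual ℝ Z) with hf
  have hdense : DenseRange f := denseRange_denseSeq (StrongDual ℝ Z)
  -- choose near-norming vectors
  have hex : ∀ n : ℕ, ∃ x : Z, ‖x‖ ≤ 1 ∧ ‖f n‖ / 2 ≤ f n x := by
    intro n
    rcases eq_or_ne (f n) 0 with h0 | h0
    · exact ⟨0, by simp, by simp [h0]⟩
    · have hpos : 0 < ‖f n‖ := norm_pos_iff.2 h0
      by_contra hcon
      push_neg at hcon
      have hb : ∀ x : Z, ‖f n x‖ ≤ (‖f n‖ / 2) * ‖x‖ := by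
        intro x
        rcases eq_or_ne x 0 with rfl | hx0
        · simp
        · have hxn : (0:ℝ) < ‖x‖ := norm_pos_iff.2 hx0
          have h1 : ‖(‖x‖⁻¹ • x : Z)‖ ≤ 1 := by
            rw [norm_smul]; simp [abs_of_nonneg (inv_nonneg.2 hxn.le), inv_mul_cancel₀ hxn.ne']
          have h2 := hcon (‖x‖⁻¹ • x) h1
          have h3 := hcon (-(‖x‖⁻¹ • x)) (by simpa using h1)
          rw [map_neg] at h3
          have h4 : |f n (‖x‖⁻¹ • x)| < ‖f n‖ / 2 := abs_lt.2 ⟨by linarith, h2⟩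
          rw [map_smul] at h4
          simp only [smul_eq_mul, abs_mul, abs_of_nonneg (inv_nonneg.2 hxn.le)] at h4
          rw [Real.norm_eq_abs]
          calc |f n x| = ‖x‖ * (‖x‖⁻¹ * |f n x|) := by field_simp
          _ ≤ ‖x‖ * (‖f n‖ / 2) := by
              apply mul_le_mul_of_nonneg_left (le_of_lt h4) hxn.le
          _ = ‖f n‖ / 2 * ‖x‖ := by ring
      have := ContinuousLinearMap.opNorm_le_bound (f n) (by positivity) hb
      linarith
  choose x hx1 hx2 using hex
  set M : Submodule ℝ Z := (Submodule.span ℝ (Set.range x)).topologicalClosure with hM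
  have hMtop : M = ⊤ := by
    by_contra hne
    have : ∃ v : Z, v ∉ M := by
      by_contra hall
      push_neg at hall
      exact hne (Submodule.eq_top_iff'.2 hall)
    obtain ⟨v, hv⟩ := this
    obtain ⟨F, hFM, hFv⟩ := aux_sep_vanish M (by rw [hM]; exact Submodule.isClosed_topologicalClosure _) hv
    have hFpos : 0 < ‖F‖ := norm_pos_iff.2 (fun h => hFv (by simp [h]))
    obtain ⟨n, hn⟩ := hdense.exists_dist_lt F (by positivity : (0:ℝ) < ‖F‖/4)
    rw [dist_eq_norm] at hn
    have hxM : ∀ m : ℕ, (x m) ∈ M := fun m =>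
      Submodule.le_topologicalClosure _ (Submodule.subset_span (Set.mem_range_self m))
    have hFx : F (x n) = 0 := hFM _ (hxM n)
    have h1 : f n (x n) = (f n - F) (x n) := by simp [hFx]
    have h2 : |(f n - F) (x n)| ≤ ‖F‖/4 := by
      calc |(f n - F) (x n)| ≤ ‖f n - F‖ * ‖x n‖ := (f n - F).le_opNorm _
      _ ≤ ‖F‖/4 * 1 := by
          apply mul_le_mul (by rw [← norm_sub_rev]; exact hn.le) (hx1 n) (norm_nonneg _) (by positivity)
      _ = ‖F‖/4 := by ring
    have h3 : ‖F‖ - ‖F‖/4 ≤ ‖f n‖ := by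
      have h4 := norm_sub_norm_le F (f n)
      linarith [hn.le]
    have h5 := hx2 n
    rw [h1] at h5
    have h6 : (f n - F) (x n) ≤ ‖F‖/4 := (le_abs_self _).trans h2
    linarith
  rw [← isSeparable_univ_iff]
  have : IsSeparable (M : Set Z) := by
    rw [hM, Submodule.topologicalClosure_coe]
    exact ((Set.countable_range x).isSeparable.span).closure
  rw [hMtop] at this
  simpa using this

/-- Bounded sequences in the dual of a reflexive space admit weak-* convergent
subsequences. -/
lemma aux_weakstar_compact {V : Type*} [NormedAddCommGroup V] [NormedSpace ℝ V]
    (hrefl : Surjective (inclusionInDoubleDual ℝ V))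
    (z : ℕ → StrongDual ℝ V) (M : ℝ) (hM : ∀ n, ‖z n‖ ≤ M) :
    ∃ (φ : ℕ → ℕ) (ζ : StrongDual ℝ V), StrictMono φ ∧ WeakStarConvSeq (z ∘ φ) ζ := by
  have hM0 : (0:ℝ) ≤ M := (norm_nonneg (z 0)).trans (hM 0)
  set Y : Submodule ℝ (StrongDual ℝ V) := (Submodule.span ℝ (Set.range z)).topologicalClosure with hY
  have hYc : IsClosed (Y : Set (StrongDual ℝ V)) := by
    rw [hY]; exact Submodule.isClosed_topologicalClosure _
  have hzY : ∀ n, z n ∈ Y :=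
    fun n => Submodule.le_topologicalClosure _ (Submodule.subset_span (Set.mem_range_self n))
  set y : ℕ → Y := fun n => ⟨z n, hzY n⟩ with hy
  have hyn : ∀ n, ‖y n‖ ≤ M := fun n => hM n
  -- Y is separable
  have hsep : SeparableSpace Y := by
    have : IsSeparable (Y : Set (StrongDual ℝ V)) := by
      rw [hY, Submodule.topologicalClosure_coe]
      exact ((Set.countable_range z).isSeparable.span).closure
    exact this.separableSpace
  -- Y is reflexive
  have hYrefl : Surjective (inclusionInDoubleDual ℝ Y) :=
    aux_subspace_refl (aux_dual_refl V hrefl) Y hYc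
  letI : NormedAddCommGroup Y := Submodule.normedAddCommGroup Y
  letI : NormedSpace ℝ Y := Submodule.normedSpace Y
  -- Dual of Y is separable
  have hdd : SeparableSpace (StrongDual ℝ (StrongDual ℝ Y)) := by
    have hcont : Continuous (inclusionInDoubleDual ℝ Y) := (inclusionInDoubleDual ℝ Y).continuous
    exact hYrefl.denseRange.separableSpace hcont
  have hdsep : SeparableSpace (StrongDual ℝ Y) := aux_sep_of_dual_sep _
  -- diagonal extraction via compactness of a countable product
  set ψ : ℕ → StrongDual ℝ Y := denseSeq (StrongDual ℝ Y) with hψ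
  have hdense : DenseRange ψ := denseRange_denseSeq _
  set S : Set (ℕ → ℝ) := Set.univ.pi (fun j => Metric.closedBall 0 (‖ψ j‖ * M)) with hS
  have hScomp : IsCompact S := isCompact_univ_pi (fun j => isCompact_closedBall _ _)
  have hmem : ∀ n, (fun j => ψ j (y n)) ∈ S := by
    intro n
    rw [hS, Set.mem_univ_pi]
    intro j
    rw [Metric.mem_closedBall, dist_zero_right, Real.norm_eq_abs]
    calc |ψ j (y n)| ≤ ‖ψ j‖ * ‖y n‖ := (ψ j).le_opNorm _
    _ ≤ ‖ψ j‖ * M := mul_le_mul_of_nonneg_left (hyn n) (norm_nonneg _)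
  obtain ⟨a, -, φ, hφ, hconv⟩ := hScomp.tendsto_subseq hmem
  have hj : ∀ j, Tendsto (fun k => ψ j (y (φ k))) atTop (𝓝 (a j)) := by
    intro j
    have := (continuous_apply j).continuousAt.tendsto.comp hconv
    exact this
  -- every functional converges along the subsequence
  have hcauchy : ∀ g : StrongDual ℝ Y, ∃ l : ℝ, Tendsto (fun k => g (y (φ k))) atTop (𝓝 l) := by
    intro g
    have : CauchySeq (fun k => g (y (φ k))) := by
      rw [Metric.cauchySeq_iff]
      intro ε hε
      obtain ⟨j, hjd⟩ := hdense.exists_dist_lt g (by positivity : (0:ℝ) < ε / (3 * (M+1)))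
      have hjc : CauchySeq (fun k => ψ j (y (φ k))) := (hj j).cauchySeq
      rw [Metric.cauchySeq_iff] at hjc
      obtain ⟨N, hN⟩ := hjc (ε/3) (by positivity)
      refine ⟨N, fun m hm n hn => ?_⟩
      have key : ∀ k, |g (y (φ k)) - ψ j (y (φ k))| ≤ ε/3 := by
        intro k
        calc |g (y (φ k)) - ψ j (y (φ k))| = |(g - ψ j) (y (φ k))| := by
              simp [ContinuousLinearMap.sub_apply]
        _ ≤ ‖g - ψ j‖ * ‖y (φ k)‖ := (g - ψ j).le_opNorm _
        _ ≤ (ε / (3 * (M+1))) * M := by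
            apply mul_le_mul _ (hyn _) (norm_nonneg _) (by positivity)
            rw [← dist_eq_norm]; exact hjd.le
        _ ≤ ε/3 := by
            rw [div_mul_eq_mul_div, div_le_div_iff₀ (by positivity) (by norm_num)]
            nlinarith
      have h2 := hN m hm n hn
      rw [Real.dist_eq] at h2 ⊢
      have k1 := key m
      have k2 := key n
      have : g (y (φ m)) - g (y (φ n)) =
          (g (y (φ m)) - ψ j (y (φ m))) + (ψ j (y (φ m)) - ψ j (y (φ n)))
          + (ψ j (y (φ n)) - g (y (φ n))) := by ring
      rw [this]
      calc _ ≤ |g (y (φ m)) - ψ j (y (φ m))| + |ψ j (y (φ m)) - ψ j (y (φ n))|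
            + |ψ j (y (φ n)) - g (y (φ n))| := by
            exact (abs_add_le _ _).trans (by gcongr; exact abs_add_le _ _)
      _ < ε/3 + ε/3 + ε/3 := by
          have k2' : |ψ j (y (φ n)) - g (y (φ n))| ≤ ε/3 := by rw [abs_sub_comm]; exact k2
          have hlt : |g (y (φ m)) - ψ j (y (φ m))| + |ψ j (y (φ m)) - ψ j (y (φ n))| <
              ε/3 + ε/3 := by
            apply add_lt_add_of_le_of_lt k1 h2
          linarith
      _ = ε := by ring
    exact cauchySeq_tendsto_of_complete this
  -- pointwise limits on V
  have hw : ∀ w : V, ∃ l : ℝ, Tendsto (fun k => z (φ k) w) atTop (𝓝 l) := by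
    intro w
    obtain ⟨l, hl⟩ := hcauchy (((inclusionInDoubleDual ℝ V) w).comp Y.subtypeL)
    exact ⟨l, by simpa [NormedSpace.dual_def] using hl⟩
  choose L hL using hw
  have hbound : ∀ w : V, ‖L w‖ ≤ M * ‖w‖ := by
    intro w
    have habs : Tendsto (fun k => |z (φ k) w|) atTop (𝓝 |L w|) := (hL w).abs
    refine le_of_tendsto' habs (fun k => ?_)
    calc |z (φ k) w| ≤ ‖z (φ k)‖ * ‖w‖ := (z (φ k)).le_opNorm w
    _ ≤ M * ‖w‖ := mul_le_mul_of_nonneg_right (hM _) (norm_nonneg _)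
  set ζL : V →ₗ[ℝ] ℝ :=
    { toFun := L
      map_add' := fun w₁ w₂ => by
        refine tendsto_nhds_unique (hL (w₁ + w₂)) ?_
        have := (hL w₁).add (hL w₂)
        simpa [map_add] using this
      map_smul' := fun c w => by
        refine tendsto_nhds_unique (hL (c • w)) ?_
        have := (hL w).const_mul c
        simpa [map_smul, smul_eq_mul] using this } with hζL
  refine ⟨φ, ζL.mkContinuous M hbound, hφ, fun w => ?_⟩
  exact hL w

lemma aux_liminf_add_le (u v : ℕ → EReal) (r : ℝ)
    (h : ∀ ε : ℝ, 0 < ε → ∀ᶠ k in atTop, u k + v k ≤ ((r + ε : ℝ) : EReal)) :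
    liminf u atTop + liminf v atTop ≤ (r : EReal) := by
  apply EReal.add_le_of_forall_lt
  intro a' ha' b' hb'
  rcases eq_or_ne a' ⊥ with rfl | ha0
  · simp
  rcases eq_or_ne b' ⊥ with rfl | hb0
  · simp
  obtain ⟨s, hs1, hs2⟩ := EReal.exists_between_coe_real ha'
  obtain ⟨t, ht1, ht2⟩ := EReal.exists_between_coe_real hb'
  have key : ∀ ε : ℝ, 0 < ε → s + t ≤ r + ε := by
    intro ε hε
    have ev1 := eventually_lt_of_lt_liminf hs2
    have ev2 := eventually_lt_of_lt_liminf ht2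
    obtain ⟨k, ⟨hk1, hk2⟩, hk3⟩ := (((h ε hε).and ev1).and ev2).exists
    have h1 : ((s:EReal) + (t:EReal)) ≤ u k + v k := add_le_add hk2.le hk3.le
    have h2 := h1.trans hk1
    rw [← EReal.coe_add] at h2
    exact EReal.coe_le_coe_iff.1 h2
  have hst : s + t ≤ r := by
    by_contra hgt
    push_neg at hgt
    have := key ((s + t - r)/2) (by linarith)
    linarith
  calc a' + b' ≤ (s:EReal) + (t:EReal) := add_le_add hs1.le ht1.le
  _ = ((s + t : ℝ) : EReal) := (EReal.coe_add s t).symm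
  _ ≤ (r:EReal) := EReal.coe_le_coe_iff.2 hst

lemma aux_finite {A B : EReal} {a₀ b₀ c : ℝ} (hA : (a₀:EReal) ≤ A) (hB : (b₀:EReal) ≤ B)
    (hAB : A + B ≤ (c:EReal)) : ∃ a b : ℝ, A = (a:EReal) ∧ B = (b:EReal) := by
  have hAbot : A ≠ ⊥ := fun h => by simp [h, le_bot_iff] at hA
  have hBbot : B ≠ ⊥ := fun h => by simp [h, le_bot_iff] at hB
  have hAtop : A ≠ ⊤ := by
    intro h
    rw [h, EReal.top_add_of_ne_bot hBbot] at hAB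
    exact (EReal.coe_lt_top c).not_ge hAB
  have hBtop : B ≠ ⊤ := by
    intro h
    rw [h, EReal.add_top_of_ne_bot hAbot] at hAB
    exact (EReal.coe_lt_top c).not_ge hAB
  exact ⟨A.toReal, B.toReal, (EReal.coe_toReal hAtop hAbot).symm,
    (EReal.coe_toReal hBtop hBbot).symm⟩


end AuxiliaryLemmas

/-- the partial inf-convolution of two weak representative functions,
under a coerciveness condition, weakly represents the sum operator; it is convex if
both terms are. -/
theorem partial_inf_convolution_represents_sum
    (V : Type*) [NormedAddCommGroup V] [NormedSpace ℝ V] [CompleteSpace V]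
    (hrefl : Function.Surjective (NormedSpace.inclusionInDoubleDual ℝ V))
    (α₁ α₂ : V → Set (StrongDual ℝ V))
    (hcommon : ∃ v : V, (α₁ v).Nonempty ∧ (α₂ v).Nonempty)
    (g₁ g₂ : V × StrongDual ℝ V → EReal)
    (hg₁lsc : WeakSeqLSC g₁) (hg₂lsc : WeakSeqLSC g₂)
    (hg₁ge : ∀ p : V × StrongDual ℝ V, ((p.2 p.1 : ℝ) : EReal) ≤ g₁ p)
    (hg₂ge : ∀ p : V × StrongDual ℝ V, ((p.2 p.1 : ℝ) : EReal) ≤ g₂ p)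
    (hg₁iff : ∀ p : V × StrongDual ℝ V,
      g₁ p = ((p.2 p.1 : ℝ) : EReal) ↔ p.2 ∈ α₁ p.1)
    (hg₂iff : ∀ p : V × StrongDual ℝ V,
      g₂ p = ((p.2 p.1 : ℝ) : EReal) ↔ p.2 ∈ α₂ p.1)
    (hcoer : ∀ C : ℝ, ∃ R : ℝ, ∀ z : StrongDual ℝ V, R < ‖z‖ →
      ∀ (v : V) (v' : StrongDual ℝ V), (C : EReal) ≤ g₁ (v, v' - z) + g₂ (v, z))
    (G : V × StrongDual ℝ V → EReal)
    (hG : ∀ p : V × StrongDual ℝ V,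
      G p = ⨅ z : StrongDual ℝ V, (g₁ (p.1, p.2 - z) + g₂ (p.1, z))) :
    WeakSeqLSC G ∧
    (∀ p : V × StrongDual ℝ V, ((p.2 p.1 : ℝ) : EReal) ≤ G p) ∧
    (∀ p : V × StrongDual ℝ V,
      G p = ((p.2 p.1 : ℝ) : EReal) ↔
        ∃ u w, u ∈ α₁ p.1 ∧ w ∈ α₂ p.1 ∧ p.2 = u + w) ∧
    ((∀ p q : V × StrongDual ℝ V, ∀ t : ℝ, 0 ≤ t → t ≤ 1 →
        g₁ (t • p + (1 - t) • q) ≤ (t : EReal) * g₁ p + ((1 - t : ℝ) : EReal) * g₁ q) →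
     (∀ p q : V × StrongDual ℝ V, ∀ t : ℝ, 0 ≤ t → t ≤ 1 →
        g₂ (t • p + (1 - t) • q) ≤ (t : EReal) * g₂ p + ((1 - t : ℝ) : EReal) * g₂ q) →
     (∀ p q : V × StrongDual ℝ V, ∀ t : ℝ, 0 ≤ t → t ≤ 1 →
        G (t • p + (1 - t) • q) ≤ (t : EReal) * G p + ((1 - t : ℝ) : EReal) * G q)) := by
  -- G dominates the duality pairing
  have hGge : ∀ p : V × StrongDual ℝ V, ((p.2 p.1 : ℝ) : EReal) ≤ G p := by
    intro p
    rw [hG]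
    refine le_iInf (fun z => ?_)
    calc ((p.2 p.1 : ℝ) : EReal) = (((p.2 - z) p.1 : ℝ) : EReal) + ((z p.1 : ℝ) : EReal) := by
          rw [← EReal.coe_add]
          norm_cast
          simp [ContinuousLinearMap.sub_apply]
    _ ≤ g₁ (p.1, p.2 - z) + g₂ (p.1, z) := add_le_add (hg₁ge (p.1, p.2 - z)) (hg₂ge (p.1, z))
  -- weak sequential lower semicontinuity
  have hGlsc : WeakSeqLSC G := by
    intro v vs v0 vs0 hv hvs
    rw [← EReal.le_of_forall_lt_iff_le]
    intro r hr
    have hfreq : ∃ᶠ n in atTop, G (v n, vs n) < (r : EReal) :=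
      frequently_lt_of_liminf_lt (by isBoundedDefault) hr
    obtain ⟨ψ, hψmono, hψ⟩ := extraction_of_frequently_atTop hfreq
    have hzex : ∀ k, ∃ z, g₁ (v (ψ k), vs (ψ k) - z) + g₂ (v (ψ k), z) < (r : EReal) := by
      intro k
      have h1 := hψ k
      rw [hG] at h1
      exact iInf_lt_iff.1 h1
    choose zs hzs using hzex
    obtain ⟨R, hR⟩ := hcoer r
    have hzb : ∀ k, ‖zs k‖ ≤ R := by
      intro k
      by_contra hgt
      push_neg at hgt
      exact absurd ((hR (zs k) hgt (v (ψ k)) (vs (ψ k))).trans_lt (hzs k)) (lt_irrefl _)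
    obtain ⟨φ, ζ, hφmono, hζ⟩ := aux_weakstar_compact hrefl zs R hzb
    have hidx : Tendsto (fun k => ψ (φ k)) atTop atTop := (hψmono.comp hφmono).tendsto_atTop
    have hv' : WeakConvSeq (fun k => v (ψ (φ k))) v0 := fun f => (hv f).comp hidx
    have hvs' : WeakStarConvSeq (fun k => vs (ψ (φ k)) - zs (φ k)) (vs0 - ζ) := by
      intro w
      have h1 : Tendsto (fun k => vs (ψ (φ k)) w) atTop (𝓝 (vs0 w)) := (hvs w).comp hidx
      have h2 := hζ w
      simpa [ContinuousLinearMap.sub_apply] using h1.sub h2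
    have l1 : g₁ (v0, vs0 - ζ) ≤
        liminf (fun k => g₁ (v (ψ (φ k)), vs (ψ (φ k)) - zs (φ k))) atTop :=
      hg₁lsc _ _ _ _ hv' hvs'
    have l2 : g₂ (v0, ζ) ≤ liminf (fun k => g₂ (v (ψ (φ k)), zs (φ k))) atTop :=
      hg₂lsc _ _ _ _ hv' hζ
    have hsum := aux_liminf_add_le (fun k => g₁ (v (ψ (φ k)), vs (ψ (φ k)) - zs (φ k)))
        (fun k => g₂ (v (ψ (φ k)), zs (φ k))) r (by
      intro ε hε
      refine Eventually.of_forall (fun k => ?_)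
      refine (hzs (φ k)).le.trans ?_
      exact_mod_cast EReal.coe_le_coe_iff.2 (by linarith))
    have hfin : G (v0, vs0) ≤ g₁ (v0, vs0 - ζ) + g₂ (v0, ζ) := by
      rw [hG]
      exact iInf_le _ ζ
    exact hfin.trans ((add_le_add l1 l2).trans hsum)
  -- characterization of equality
  have hGiff : ∀ p : V × StrongDual ℝ V,
      G p = ((p.2 p.1 : ℝ) : EReal) ↔
        ∃ u w, u ∈ α₁ p.1 ∧ w ∈ α₂ p.1 ∧ p.2 = u + w := by
    rintro ⟨v, vstar⟩
    constructor
    · intro heq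
      set r : ℝ := vstar v with hrdef
      have hzex : ∀ k : ℕ, ∃ z, g₁ (v, vstar - z) + g₂ (v, z)
          < ((r + 1/(k+1) : ℝ) : EReal) := by
        intro k
        have h1 : G (v, vstar) < ((r + 1/(k+1) : ℝ) : EReal) := by
          rw [heq]
          apply EReal.coe_lt_coe_iff.2
          have h0 : (0:ℝ) < 1/((k:ℝ)+1) := by positivity
          linarith
        rw [hG] at h1
        exact iInf_lt_iff.1 h1
      choose zs hzs using hzex
      obtain ⟨R, hR⟩ := hcoer (r + 2)
      have hzb : ∀ k, ‖zs k‖ ≤ R := by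
        intro k
        by_contra hgt
        push_neg at hgt
        have h1 := (hR (zs k) hgt v vstar).trans_lt (hzs k)
        have h2 : (1:ℝ)/(k+1) ≤ 1 := by
          rw [div_le_one (by positivity)]
          simp
        have := EReal.coe_lt_coe_iff.1 h1
        linarith
      obtain ⟨φ, ζ, hφmono, hζ⟩ := aux_weakstar_compact hrefl zs R hzb
      have hvconst : WeakConvSeq (fun _ : ℕ => v) v := fun f => tendsto_const_nhds
      have hvs' : WeakStarConvSeq (fun k => vstar - zs (φ k)) (vstar - ζ) := by
        intro w
        have h2 := hζ w
        simpa [ContinuousLinearMap.sub_apply] using (tendsto_const_nhds (x := vstar w)).sub h2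
      have l1 : g₁ (v, vstar - ζ) ≤ liminf (fun k => g₁ (v, vstar - zs (φ k))) atTop :=
        hg₁lsc _ _ _ _ hvconst hvs'
      have l2 : g₂ (v, ζ) ≤ liminf (fun k => g₂ (v, zs (φ k))) atTop :=
        hg₂lsc _ _ _ _ hvconst hζ
      have hsum := aux_liminf_add_le (fun k => g₁ (v, vstar - zs (φ k)))
          (fun k => g₂ (v, zs (φ k))) r (by
        intro ε hε
        obtain ⟨K, hK⟩ := exists_nat_one_div_lt hε
        filter_upwards [eventually_ge_atTop K] with k hk
        refine (hzs (φ k)).le.trans ?_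
        apply EReal.coe_le_coe_iff.2
        have h1 : (1:ℝ)/(φ k + 1) ≤ 1/(k+1) := by
          apply div_le_div_of_nonneg_left (by norm_num) (by positivity)
          have hka : k ≤ φ k := hφmono.le_apply
          push_cast
          linarith [(Nat.cast_le (α := ℝ)).2 hka]
        have h2 : (1:ℝ)/(k+1) ≤ 1/(K+1) := by
          apply div_le_div_of_nonneg_left (by norm_num) (by positivity)
          push_cast
          linarith [(Nat.cast_le (α := ℝ)).2 hk]
        linarith [hK])
      have hAB : g₁ (v, vstar - ζ) + g₂ (v, ζ) ≤ (r : EReal) :=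
        (add_le_add l1 l2).trans hsum
      have hA0 : (((vstar - ζ) v : ℝ) : EReal) ≤ g₁ (v, vstar - ζ) := hg₁ge (v, vstar - ζ)
      have hB0 : ((ζ v : ℝ) : EReal) ≤ g₂ (v, ζ) := hg₂ge (v, ζ)
      obtain ⟨a, b, ha, hb⟩ := aux_finite hA0 hB0 hAB
      rw [ha] at hA0 hAB
      rw [hb] at hB0 hAB
      rw [← EReal.coe_add] at hAB
      have hA0' := EReal.coe_le_coe_iff.1 hA0
      have hB0' := EReal.coe_le_coe_iff.1 hB0
      have hAB' := EReal.coe_le_coe_iff.1 hAB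
      have hsplit : (vstar - ζ) v + ζ v = r := by
        simp [ContinuousLinearMap.sub_apply, hrdef]
      have hAeq : a = (vstar - ζ) v := by linarith
      have hBeq : b = ζ v := by linarith
      refine ⟨vstar - ζ, ζ, (hg₁iff (v, vstar - ζ)).1 ?_, (hg₂iff (v, ζ)).1 ?_, by abel⟩
      · rw [ha, hAeq]
      · rw [hb, hBeq]
    · rintro ⟨u, w, hu, hw, hvw⟩
      refine le_antisymm ?_ (hGge _)
      rw [hG]
      have h1 : g₁ (v, u) = ((u v : ℝ) : EReal) := (hg₁iff (v, u)).2 hu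
      have h2 : g₂ (v, w) = ((w v : ℝ) : EReal) := (hg₂iff (v, w)).2 hw
      calc (⨅ z : StrongDual ℝ V, (g₁ ((v, vstar).1, (v, vstar).2 - z) + g₂ ((v, vstar).1, z)))
          ≤ g₁ (v, vstar - w) + g₂ (v, w) := iInf_le _ w
      _ = ((vstar v : ℝ) : EReal) := by
          have hvw' : vstar = u + w := hvw
          have hvu : vstar - w = u := by rw [hvw']; abel
          rw [hvu, h1, h2, ← EReal.coe_add]
          norm_cast
          rw [hvw']
          simp
  refine ⟨hGlsc, hGge, hGiff, ?_⟩
  -- convexity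
  intro hc1 hc2 p q t ht0 ht1
  rcases eq_or_lt_of_le ht0 with rfl | ht0'
  · simp only [zero_smul, sub_zero, one_smul, zero_add, EReal.coe_zero, zero_mul,
      EReal.coe_one, one_mul]
    exact le_rfl
  rcases eq_or_lt_of_le ht1 with rfl | ht1'
  · simp only [one_smul, sub_self, zero_smul, add_zero, EReal.coe_zero, zero_mul,
      EReal.coe_one, one_mul]
    exact le_rfl
  have htpos : (0 : EReal) < (t : EReal) := by exact_mod_cast ht0'
  have ht1pos : (0 : EReal) < ((1 - t : ℝ) : EReal) := by
    exact_mod_cast (by linarith : (0:ℝ) < 1 - t)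
  have hGp_bot : G p ≠ ⊥ := fun h => by simpa [h, le_bot_iff] using hGge p
  have hGq_bot : G q ≠ ⊥ := fun h => by simpa [h, le_bot_iff] using hGge q
  rcases eq_or_ne (G p) ⊤ with hp | hp
  · have : (t : EReal) * G p + ((1 - t : ℝ) : EReal) * G q = ⊤ := by
      rw [hp, EReal.mul_top_of_pos htpos]
      apply EReal.top_add_of_ne_bot
      intro h
      rcases eq_or_ne (G q) ⊤ with hq | hq
      · rw [hq, EReal.mul_top_of_pos ht1pos] at h
        exact (by simp : (⊤:EReal) ≠ ⊥) h
      · have := EReal.coe_toReal hq hGq_bot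
        rw [← this, ← EReal.coe_mul] at h
        exact (EReal.coe_ne_bot _) h
    rw [this]
    exact le_top
  rcases eq_or_ne (G q) ⊤ with hq | hq
  · have : (t : EReal) * G p + ((1 - t : ℝ) : EReal) * G q = ⊤ := by
      rw [hq, EReal.mul_top_of_pos ht1pos]
      apply EReal.add_top_of_ne_bot
      intro h
      have := EReal.coe_toReal hp hGp_bot
      rw [← this, ← EReal.coe_mul] at h
      exact (EReal.coe_ne_bot _) h
    rw [this]
    exact le_top
  -- both finite
  set gp : ℝ := (G p).toReal with hgp
  set gq : ℝ := (G q).toReal with hgq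
  have hpe : G p = (gp : EReal) := (EReal.coe_toReal hp hGp_bot).symm
  have hqe : G q = (gq : EReal) := (EReal.coe_toReal hq hGq_bot).symm
  rw [hpe, hqe, ← EReal.coe_mul, ← EReal.coe_mul, ← EReal.coe_add]
  rw [← EReal.le_of_forall_lt_iff_le]
  intro x hx
  have hcx : t * gp + (1 - t) * gq < x := EReal.coe_lt_coe_iff.1 hx
  set ε : ℝ := x - (t * gp + (1 - t) * gq) with hε
  have hεpos : 0 < ε := by rw [hε]; linarith
  -- near minimizers
  have h1 : G p < ((gp + ε/2 : ℝ) : EReal) := by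
    rw [hpe]; exact EReal.coe_lt_coe_iff.2 (by linarith)
  have h2 : G q < ((gq + ε/2 : ℝ) : EReal) := by
    rw [hqe]; exact EReal.coe_lt_coe_iff.2 (by linarith)
  rw [hG] at h1 h2
  obtain ⟨z₁, hz₁⟩ := iInf_lt_iff.1 h1
  obtain ⟨z₂, hz₂⟩ := iInf_lt_iff.1 h2
  obtain ⟨a1, a2, ha1, ha2⟩ := aux_finite (hg₁ge (p.1, p.2 - z₁)) (hg₂ge (p.1, z₁)) hz₁.le
  obtain ⟨b1, b2, hb1, hb2⟩ := aux_finite (hg₁ge (q.1, q.2 - z₂)) (hg₂ge (q.1, z₂)) hz₂.le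
  rw [ha1, ha2, ← EReal.coe_add] at hz₁
  rw [hb1, hb2, ← EReal.coe_add] at hz₂
  have hz₁' := EReal.coe_lt_coe_iff.1 hz₁
  have hz₂' := EReal.coe_lt_coe_iff.1 hz₂
  set z : StrongDual ℝ V := t • z₁ + (1 - t) • z₂ with hz
  have harg1 : ((t • p + (1 - t) • q).1, (t • p + (1 - t) • q).2 - z)
      = t • (p.1, p.2 - z₁) + (1 - t) • (q.1, q.2 - z₂) := by
    apply Prod.ext
    · simp
    · simp only [Prod.snd_add, Prod.smul_snd, hz, smul_sub]
      abel
  have harg2 : ((t • p + (1 - t) • q).1, z) = t • (p.1, z₁) + (1 - t) • (q.1, z₂) := by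
    apply Prod.ext
    · simp
    · simp [hz]
  have step1 : G (t • p + (1 - t) • q)
      ≤ g₁ ((t • p + (1 - t) • q).1, (t • p + (1 - t) • q).2 - z)
        + g₂ ((t • p + (1 - t) • q).1, z) := by
    rw [hG]
    exact iInf_le _ z
  rw [harg1, harg2] at step1
  have step2 := hc1 (p.1, p.2 - z₁) (q.1, q.2 - z₂) t ht0 ht1
  have step3 := hc2 (p.1, z₁) (q.1, z₂) t ht0 ht1
  rw [ha1, hb1] at step2
  rw [ha2, hb2] at step3
  rw [← EReal.coe_mul, ← EReal.coe_mul, ← EReal.coe_add] at step2 step3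
  have step4 : G (t • p + (1 - t) • q)
      ≤ ((t * a1 + (1 - t) * b1 : ℝ) : EReal) + ((t * a2 + (1 - t) * b2 : ℝ) : EReal) :=
    step1.trans (add_le_add step2 step3)
  rw [← EReal.coe_add] at step4
  refine step4.trans (EReal.coe_le_coe_iff.2 ?_)
  nlinarith [hz₁', hz₂', ht0', ht1']
end

section
/- Under the semi-monotonicity hypotheses on β, for any u, ṽ ∈ V the mapping γ_{u,ṽ}: V → ℝ ∪ {+∞}, v ↦ sup{⟨u*, v - ṽ⟩ : u* ∈ β(v,u)} is weakly lower semi-continuous. -/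
open Filter Topology

/-- under the semi-monotonicity hypotheses on `β`, for any `u, ṽ ∈ V`
the mapping `γ_{u,ṽ} : v ↦ sup{⟨u*, v - ṽ⟩ : u* ∈ β(v,u)}` is weakly (sequentially)
lower semi-continuous on `V`. -/
theorem gamma_weakly_lsc
    (V : Type*) [NormedAddCommGroup V] [NormedSpace ℝ V] [CompleteSpace V]
    (hrefl : Function.Surjective (NormedSpace.inclusionInDoubleDual ℝ V))
    (H : Type*) [NormedAddCommGroup H] [InnerProductSpace ℝ H] [CompleteSpace H]
    (e : V →L[ℝ] H) (he : Function.Injective e) (hdense : DenseRange e)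
    (hcompact : ∀ (vn : ℕ → V) (v0 : V), WeakConvSeq vn v0 →
      Tendsto (fun n => e (vn n)) atTop (𝓝 (e v0)))
    (β : H → V → Set (StrongDual ℝ V))
    (hmax : ∀ z : H, MaximalMonotoneOp (β z))
    (hlsc : ∀ (z : H) (u : V) (u' : StrongDual ℝ V), u' ∈ β z u →
      ∀ zn : ℕ → H, Tendsto zn atTop (𝓝 z) →
        ∃ un : ℕ → StrongDual ℝ V,
          (∀ n, un n ∈ β (zn n) u) ∧ Tendsto un atTop (𝓝 u'))
    (u w : V)
    (γ : V → EReal)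
    (hγ : ∀ v : V, γ v = ⨆ u' : {u' : StrongDual ℝ V // u' ∈ β (e v) u},
      ((u'.1 (v - w) : ℝ) : EReal)) :
    ∀ (vn : ℕ → V) (v0 : V), WeakConvSeq vn v0 →
      γ v0 ≤ liminf (fun n => γ (vn n)) atTop := by
  intro vn v0 hweak
  -- boundedness of the weakly convergent sequence
  obtain ⟨C, hC⟩ : ∃ C, ∀ n, ‖vn n - w‖ ≤ C := by
    obtain ⟨C', hC'⟩ := banach_steinhaus
      (g := fun n => NormedSpace.inclusionInDoubleDual ℝ V (vn n)) (fun φ => by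
        obtain ⟨M, hM⟩ := ((hweak φ).norm).bddAbove_range
        exact ⟨M, fun n => by
          simpa using hM (Set.mem_range_self n)⟩)
    refine ⟨C' + ‖w‖, fun n => ?_⟩
    have h1 : ‖vn n‖ ≤ C' := by
      have := (NormedSpace.inclusionInDoubleDualLi (𝕜 := ℝ) (E := V)).norm_map (vn n)
      rw [← this]
      exact hC' n
    calc ‖vn n - w‖ ≤ ‖vn n‖ + ‖w‖ := norm_sub_le _ _
      _ ≤ C' + ‖w‖ := by linarith
  rw [hγ v0]
  apply iSup_le
  rintro ⟨u', hu'⟩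
  have hz : Tendsto (fun n => e (vn n)) atTop (𝓝 (e v0)) := hcompact vn v0 hweak
  obtain ⟨un, hun, hulim⟩ := hlsc (e v0) u u' hu' (fun n => e (vn n)) hz
  -- the key limit
  have hnorm0 : Tendsto (fun n => ‖un n - u'‖) atTop (𝓝 0) :=
    tendsto_iff_norm_sub_tendsto_zero.mp hulim
  have hterm1 : Tendsto (fun n => (un n - u') (vn n - w)) atTop (𝓝 0) := by
    refine squeeze_zero_norm (fun n => ?_) (by simpa using hnorm0.mul_const C)
    calc ‖(un n - u') (vn n - w)‖ ≤ ‖un n - u'‖ * ‖vn n - w‖ :=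
          (un n - u').le_opNorm _
      _ ≤ ‖un n - u'‖ * C :=
          mul_le_mul_of_nonneg_left (hC n) (norm_nonneg _)
  have hterm2 : Tendsto (fun n => u' (vn n - w)) atTop (𝓝 (u' (v0 - w))) := by
    have := (hweak u').sub_const (u' w)
    simpa [map_sub] using this
  have hkey : Tendsto (fun n => (un n) (vn n - w)) atTop (𝓝 (u' (v0 - w))) := by
    have := hterm1.add hterm2
    rw [zero_add] at this
    refine this.congr fun n => ?_
    simp [ContinuousLinearMap.sub_apply]
  have hkeyE : Tendsto (fun n => (((un n) (vn n - w) : ℝ) : EReal)) atTop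
      (𝓝 ((u' (v0 - w) : ℝ) : EReal)) :=
    (continuous_coe_real_ereal.tendsto _).comp hkey
  have hle : ∀ n, (((un n) (vn n - w) : ℝ) : EReal) ≤ γ (vn n) := by
    intro n
    rw [hγ (vn n)]
    exact le_iSup (fun u'' : {u'' : StrongDual ℝ V // u'' ∈ β (e (vn n)) u} =>
      ((u''.1 (vn n - w) : ℝ) : EReal)) ⟨un n, hun n⟩
  calc ((u' (v0 - w) : ℝ) : EReal)
      = liminf (fun n => (((un n) (vn n - w) : ℝ) : EReal)) atTop := hkeyE.liminf_eq.symm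
    _ ≤ liminf (fun n => γ (vn n)) atTop := liminf_le_liminf (Eventually.of_forall hle)
end

section
/- Let α(v) := β(v,v) be a semi-monotone operator, and for each z ∈ H let f_z be the Fitzpatrick function of the maximal monotone operator β(z,·). Then the function φ(v,v*) := f_v(v,v*) is weakly lower semi-continuous on V × V', satisfies φ(v,v*) ≥ ⟨v*,v⟩ everywhere, and φ(v,v*) = ⟨v*,v⟩ if and only if v* ∈ α(v); i.e., φ weakly represents α. -/
open Filter Topology

lemma mem_of_maxmono {V : Type*} [NormedAddCommGroup V] [NormedSpace ℝ V]
    (α : V → Set (StrongDual ℝ V)) (h : MaximalMonotoneOp α)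
    (v : V) (v' : StrongDual ℝ V)
    (hv : ∀ u u', u' ∈ α u → 0 ≤ (v' - u') (v - u)) : v' ∈ α v := by
  set α' : V → Set (StrongDual ℝ V) :=
    fun u => α u ∪ {x | u = v ∧ x = v'} with hα'
  have hmono : MonotoneOp α' := by
    intro a b a' b' ha hb
    rcases ha with ha | ⟨hav, hav'⟩
    · rcases hb with hb | ⟨hbv, hbv'⟩
      · exact h.1 a b a' b' ha hb
      · rw [hbv, hbv']
        have : (a' - v') (a - v) = (v' - a') (v - a) := by
          simp only [ContinuousLinearMap.sub_apply, map_sub]; ring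
        rw [this]; exact hv a a' ha
    · rw [hav, hav']
      rcases hb with hb | ⟨hbv, hbv'⟩
      · exact hv b b' hb
      · rw [hbv, hbv']; simp
  have heq := h.2 α' hmono (fun u => Set.subset_union_left) v
  rw [← heq]
  exact Or.inr ⟨rfl, rfl⟩

lemma weakconv_bounded {V : Type*} [NormedAddCommGroup V] [NormedSpace ℝ V]
    (v : ℕ → V) (v0 : V) (h : WeakConvSeq v v0) :
    ∃ C : ℝ, ∀ n, ‖v n‖ ≤ C := by
  have hb : ∀ ψ : StrongDual ℝ V, ∃ C, ∀ n,
      ‖(NormedSpace.inclusionInDoubleDual ℝ V (v n)) ψ‖ ≤ C := by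
    intro ψ
    have := (h ψ).norm.bddAbove_range
    obtain ⟨C, hC⟩ := this
    exact ⟨C, fun n => hC ⟨n, rfl⟩⟩
  obtain ⟨C, hC⟩ := banach_steinhaus hb
  refine ⟨C, fun n => ?_⟩
  have : ‖NormedSpace.inclusionInDoubleDual ℝ V (v n)‖ = ‖v n‖ :=
    (NormedSpace.inclusionInDoubleDualLi ℝ).norm_map (v n)
  rw [← this]; exact hC n

/-- for a semi-monotone operator `α(v) = β(v,v)`, the function
`φ(v,v*) := f_v(v,v*)`, with `f_z` the Fitzpatrick function of `β(z,·)`, is weakly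
(sequentially) lower semi-continuous, dominates the duality pairing, and equals it
exactly on the graph of `α`; i.e. `φ` weakly represents `α`. -/
theorem semimonotone_representation
    (V : Type*) [NormedAddCommGroup V] [NormedSpace ℝ V] [CompleteSpace V]
    [TopologicalSpace.SeparableSpace V]
    (hrefl : Function.Surjective (NormedSpace.inclusionInDoubleDual ℝ V))
    (H : Type*) [NormedAddCommGroup H] [InnerProductSpace ℝ H] [CompleteSpace H]
    (e : V →L[ℝ] H) (he : Function.Injective e) (hdense : DenseRange e)
    (hcompact : ∀ (vn : ℕ → V) (v0 : V), WeakConvSeq vn v0 →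
      Tendsto (fun n => e (vn n)) atTop (𝓝 (e v0)))
    (β : H → V → Set (StrongDual ℝ V))
    (hmax : ∀ z : H, MaximalMonotoneOp (β z))
    (hlsc : ∀ (z : H) (u : V) (u' : StrongDual ℝ V), u' ∈ β z u →
      ∀ zn : ℕ → H, Tendsto zn atTop (𝓝 z) →
        ∃ un : ℕ → StrongDual ℝ V,
          (∀ n, un n ∈ β (zn n) u) ∧ Tendsto un atTop (𝓝 u'))
    (φ : V × StrongDual ℝ V → EReal)
    (hφ : ∀ p : V × StrongDual ℝ V,
      φ p = ⨆ q : {q : V × StrongDual ℝ V // q.2 ∈ β (e p.1) q.1},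
        ((p.2 q.1.1 - q.1.2 (q.1.1 - p.1) : ℝ) : EReal)) :
    (∀ (v : ℕ → V) (vs : ℕ → StrongDual ℝ V) (v0 : V)
        (vs0 : StrongDual ℝ V),
      WeakConvSeq v v0 → WeakStarConvSeq vs vs0 →
      φ (v0, vs0) ≤ liminf (fun n => φ (v n, vs n)) atTop) ∧
    (∀ p : V × StrongDual ℝ V, ((p.2 p.1 : ℝ) : EReal) ≤ φ p) ∧
    (∀ p : V × StrongDual ℝ V,
      φ p = ((p.2 p.1 : ℝ) : EReal) ↔ p.2 ∈ β (e p.1) p.1) := by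
  -- the Fitzpatrick term is always below the sup
  have hterm_le : ∀ (p : V × StrongDual ℝ V) (u : V)
      (u' : StrongDual ℝ V), u' ∈ β (e p.1) u →
      ((p.2 u - u' (u - p.1) : ℝ) : EReal) ≤ φ p := by
    intro p u u' hu
    rw [hφ p]
    exact le_iSup (fun q : {q : V × StrongDual ℝ V // q.2 ∈ β (e p.1) q.1}
      => ((p.2 q.1.1 - q.1.2 (q.1.1 - p.1) : ℝ) : EReal)) ⟨(u, u'), hu⟩
  -- key: pairing ≤ φ, with membership criterion
  have hge : ∀ p : V × StrongDual ℝ V, ((p.2 p.1 : ℝ) : EReal) ≤ φ p := by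
    intro p
    by_cases hp : p.2 ∈ β (e p.1) p.1
    · have := hterm_le p p.1 p.2 hp
      simpa using this
    · -- not in the graph: find a violating pair
      by_contra hcon
      push_neg at hcon
      apply hp
      apply mem_of_maxmono (β (e p.1)) (hmax (e p.1)) p.1 p.2
      intro u u' hu
      have h1 := hterm_le p u u' hu
      have h2 : ((p.2 u - u' (u - p.1) : ℝ) : EReal) ≤ ((p.2 p.1 : ℝ) : EReal) :=
        h1.trans hcon.le
      rw [EReal.coe_le_coe_iff] at h2
      have : (p.2 - u') (p.1 - u) = p.2 p.1 - (p.2 u - u' (u - p.1)) := by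
        simp only [ContinuousLinearMap.sub_apply, map_sub]; ring
      rw [this]; linarith
  refine ⟨?_, hge, ?_⟩
  · -- weak lower semicontinuity
    intro v vs v0 vs0 hv hvs
    rw [hφ (v0, vs0)]
    apply iSup_le
    rintro ⟨⟨u, u'⟩, hu⟩
    simp only
    obtain ⟨C, hC⟩ := weakconv_bounded v v0 hv
    obtain ⟨un, hun, huntend⟩ := hlsc (e v0) u u' hu (fun n => e (v n))
      (hcompact v v0 hv)
    -- term_n ≤ φ (v n, vs n)
    have hle : ∀ n, ((vs n u - un n (u - v n) : ℝ) : EReal) ≤ φ (v n, vs n) :=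
      fun n => hterm_le (v n, vs n) u (un n) (hun n)
    -- term_n → vs0 u - u' (u - v0)
    have htend : Tendsto (fun n => vs n u - un n (u - v n)) atTop
        (𝓝 (vs0 u - u' (u - v0))) := by
      have h1 : Tendsto (fun n => vs n u) atTop (𝓝 (vs0 u)) := hvs u
      have h2 : Tendsto (fun n => un n (u - v n)) atTop (𝓝 (u' (u - v0))) := by
        have hsplit : ∀ n, un n (u - v n)
            = (un n - u') (u - v n) + (u' u - u' (v n)) := by
          intro n
          simp only [ContinuousLinearMap.sub_apply, map_sub]; ring
        have h3 : Tendsto (fun n => (un n - u') (u - v n)) atTop (𝓝 0) := by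
          apply squeeze_zero_norm (a := fun n => ‖un n - u'‖ * (‖u‖ + C))
          · intro n
            calc ‖(un n - u') (u - v n)‖ ≤ ‖un n - u'‖ * ‖u - v n‖ :=
                  (un n - u').le_opNorm _
              _ ≤ ‖un n - u'‖ * (‖u‖ + C) := by
                  apply mul_le_mul_of_nonneg_left _ (norm_nonneg _)
                  exact (norm_sub_le _ _).trans (by linarith [hC n])
          · have : Tendsto (fun n => ‖un n - u'‖) atTop (𝓝 0) :=
              tendsto_iff_norm_sub_tendsto_zero.mp huntend
            simpa using this.mul_const (‖u‖ + C)
        have h4 : Tendsto (fun n => u' u - u' (v n)) atTop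
            (𝓝 (u' u - u' (v0))) := tendsto_const_nhds.sub (hv u')
        have := h3.add h4
        rw [zero_add] at this
        have heq : u' u - u' v0 = u' (u - v0) := by rw [map_sub]
        rw [heq] at this
        exact this.congr (fun n => (hsplit n).symm)
      exact h1.sub h2
    have htendE : Tendsto (fun n => ((vs n u - un n (u - v n) : ℝ) : EReal))
        atTop (𝓝 ((vs0 u - u' (u - v0) : ℝ) : EReal)) :=
      EReal.tendsto_coe.mpr htend
    calc ((vs0 u - u' (u - v0) : ℝ) : EReal)
        = liminf (fun n => ((vs n u - un n (u - v n) : ℝ) : EReal)) atTop :=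
          (htendE.liminf_eq).symm
      _ ≤ liminf (fun n => φ (v n, vs n)) atTop :=
          liminf_le_liminf (Eventually.of_forall hle)
  · -- equality iff membership
    intro p
    constructor
    · intro hpeq
      apply mem_of_maxmono (β (e p.1)) (hmax (e p.1)) p.1 p.2
      intro u u' hu
      have h1 := hterm_le p u u' hu
      rw [hpeq, EReal.coe_le_coe_iff] at h1
      have : (p.2 - u') (p.1 - u) = p.2 p.1 - (p.2 u - u' (u - p.1)) := by
        simp only [ContinuousLinearMap.sub_apply, map_sub]; ring
      rw [this]; linarith
    · intro hp
      refine le_antisymm ?_ (hge p)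
      rw [hφ p]
      apply iSup_le
      rintro ⟨⟨u, u'⟩, hu⟩
      simp only
      rw [EReal.coe_le_coe_iff]
      have hmono := (hmax (e p.1)).1 p.1 u p.2 u' hp hu
      have : p.2 u - u' (u - p.1) = p.2 p.1 - (p.2 - u') (p.1 - u) := by
        simp only [ContinuousLinearMap.sub_apply, map_sub]; ring
      rw [this]; linarith
end

section
/- Every semi-monotone operator α(v) = β(v,v) is generalized pseudo-monotone in the sense of Browder–Hess: if (u_n, u_n*) ∈ graph(α), u_n ⇀ u, u_n* ⇀ u*, and limsup ⟨u_n*, u_n⟩ ≤ ⟨u*, u⟩, then u* ∈ α(u) and ⟨u_n*, u_n⟩ → ⟨u*, u⟩. -/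
open Filter Topology

/-- A weakly convergent sequence is norm-bounded. -/
lemma bdd_of_weakConvSeq {V : Type*} [NormedAddCommGroup V] [NormedSpace ℝ V]
    (vn : ℕ → V) (v0 : V) (h : WeakConvSeq vn v0) :
    ∃ M : ℝ, 0 ≤ M ∧ ∀ n, ‖vn n‖ ≤ M := by
  have hpt : ∀ φ : StrongDual ℝ V, ∃ C, ∀ n,
      ‖(NormedSpace.inclusionInDoubleDual ℝ V (vn n)) φ‖ ≤ C := by
    intro φ
    obtain ⟨C, hC⟩ := ((h φ).norm).bddAbove_range
    exact ⟨C, fun n => hC ⟨n, rfl⟩⟩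
  obtain ⟨M, hM⟩ := banach_steinhaus hpt
  refine ⟨M, le_trans (norm_nonneg _) (hM 0), fun n => ?_⟩
  have := (NormedSpace.inclusionInDoubleDualLi ℝ (E := V)).norm_map (vn n)
  rw [← this]; exact hM n

/-- A weak-* convergent sequence of functionals is norm-bounded. -/
lemma bdd_of_weakStarConvSeq {V : Type*} [NormedAddCommGroup V] [NormedSpace ℝ V]
    [CompleteSpace V]
    (fn : ℕ → StrongDual ℝ V) (f0 : StrongDual ℝ V)
    (h : WeakStarConvSeq fn f0) : ∃ M : ℝ, 0 ≤ M ∧ ∀ n, ‖fn n‖ ≤ M := by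
  have hpt : ∀ x : V, ∃ C, ∀ n, ‖fn n x‖ ≤ C := by
    intro x
    obtain ⟨C, hC⟩ := ((h x).norm).bddAbove_range
    exact ⟨C, fun n => hC ⟨n, rfl⟩⟩
  obtain ⟨M, hM⟩ := banach_steinhaus hpt
  exact ⟨M, le_trans (norm_nonneg _) (hM 0), hM⟩

/-- Strong–weak pairing convergence. -/
lemma pairing_tendsto {V : Type*} [NormedAddCommGroup V] [NormedSpace ℝ V]
    (fn : ℕ → StrongDual ℝ V) (f : StrongDual ℝ V)
    (hf : Tendsto fn atTop (𝓝 f)) (vn : ℕ → V) (v : V) (hv : WeakConvSeq vn v)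
    (M : ℝ) (hM : ∀ n, ‖vn n‖ ≤ M) :
    Tendsto (fun n => fn n (vn n)) atTop (𝓝 (f v)) := by
  have h0 : Tendsto (fun n => ‖fn n - f‖ * M) atTop (𝓝 0) := by
    have := (tendsto_iff_norm_sub_tendsto_zero.mp hf).mul_const M
    simpa using this
  have h1 : Tendsto (fun n => (fn n - f) (vn n)) atTop (𝓝 0) := by
    apply squeeze_zero_norm _ h0
    intro n
    calc ‖(fn n - f) (vn n)‖ ≤ ‖fn n - f‖ * ‖vn n‖ := (fn n - f).le_opNorm _
      _ ≤ ‖fn n - f‖ * M := mul_le_mul_of_nonneg_left (hM n) (norm_nonneg _)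
  have h2 := h1.add (hv f)
  simp only [ContinuousLinearMap.sub_apply, zero_add] at h2
  simpa using h2

/-- every semi-monotone operator `α(v) = β(v,v)` is generalized
pseudo-monotone in the sense of Browder–Hess. -/
theorem semimonotone_generalized_pseudomonotone
    (V : Type*) [NormedAddCommGroup V] [NormedSpace ℝ V] [CompleteSpace V]
    (hrefl : Function.Surjective (NormedSpace.inclusionInDoubleDual ℝ V))
    (H : Type*) [NormedAddCommGroup H] [InnerProductSpace ℝ H] [CompleteSpace H]
    (e : V →L[ℝ] H) (he : Function.Injective e) (hdense : DenseRange e)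
    (hcompact : ∀ (vn : ℕ → V) (v0 : V), WeakConvSeq vn v0 →
      Tendsto (fun n => e (vn n)) atTop (𝓝 (e v0)))
    (β : H → V → Set (StrongDual ℝ V))
    (hmax : ∀ z : H, MaximalMonotoneOp (β z))
    (hlsc : ∀ (z : H) (u : V) (u' : StrongDual ℝ V), u' ∈ β z u →
      ∀ zn : ℕ → H, Tendsto zn atTop (𝓝 z) →
        ∃ un : ℕ → StrongDual ℝ V,
          (∀ n, un n ∈ β (zn n) u) ∧ Tendsto un atTop (𝓝 u')) :
    ∀ (un : ℕ → V) (uns : ℕ → StrongDual ℝ V) (u : V)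
      (us : StrongDual ℝ V),
      (∀ n, uns n ∈ β (e (un n)) (un n)) →
      WeakConvSeq un u → WeakStarConvSeq uns us →
      limsup (fun n => uns n (un n)) atTop ≤ us u →
      us ∈ β (e u) u ∧ Tendsto (fun n => uns n (un n)) atTop (𝓝 (us u)) := by
  intro un uns u us hg hwu hws hls
  obtain ⟨M1, hM1nn, hM1⟩ := bdd_of_weakConvSeq un u hwu
  obtain ⟨M2, hM2nn, hM2⟩ := bdd_of_weakStarConvSeq uns us hws
  set a : ℕ → ℝ := fun n => uns n (un n) with ha
  have habs : ∀ n, |a n| ≤ M2 * M1 := by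
    intro n
    calc |a n| = ‖uns n (un n)‖ := (Real.norm_eq_abs _).symm
      _ ≤ ‖uns n‖ * ‖un n‖ := (uns n).le_opNorm _
      _ ≤ M2 * M1 := mul_le_mul (hM2 n) (hM1 n) (norm_nonneg _) hM2nn
  have hbddA : IsBoundedUnder (· ≤ ·) atTop a :=
    isBoundedUnder_of ⟨M2 * M1, fun n => (abs_le.mp (habs n)).2⟩
  have hbddB : IsBoundedUnder (· ≥ ·) atTop a :=
    isBoundedUnder_of ⟨-(M2 * M1), fun n => (abs_le.mp (habs n)).1⟩
  -- the key liminf estimate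
  have key : ∀ (w : V) (w' : StrongDual ℝ V), w' ∈ β (e u) w →
      us w + w' u - w' w ≤ liminf a atTop := by
    intro w w' hw'
    obtain ⟨wn, hwn, hwnlim⟩ := hlsc (e u) w w' hw' (fun n => e (un n)) (hcompact un u hwu)
    set b : ℕ → ℝ := fun n => uns n w + wn n (un n) - wn n w with hb
    have hbt : Tendsto b atTop (𝓝 (us w + w' u - w' w)) := by
      have h1 := hws w
      have h2 := pairing_tendsto wn w' hwnlim un u hwu M1 hM1
      have h3 : Tendsto (fun n => wn n w) atTop (𝓝 (w' w)) :=
        ((ContinuousLinearMap.apply ℝ ℝ w).continuous.tendsto w').comp hwnlim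
      exact (h1.add h2).sub h3
    have hle : ∀ n, b n ≤ a n := by
      intro n
      have hmono := (hmax (e (un n))).1 (un n) w (uns n) (wn n) (hg n) (hwn n)
      simp only [ContinuousLinearMap.sub_apply, map_sub] at hmono
      simp only [hb, ha]
      linarith
    have := liminf_le_liminf (Eventually.of_forall hle)
      (hbt.isBoundedUnder_ge) hbddA.isCoboundedUnder_ge
    rwa [hbt.liminf_eq] at this
  have hll : liminf a atTop ≤ us u :=
    le_trans (liminf_le_limsup hbddA hbddB) hls
  -- (u, us) is monotonically related to the graph of β (e u)
  have hrel : ∀ (w : V) (w' : StrongDual ℝ V), w' ∈ β (e u) w →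
      0 ≤ (us - w') (u - w) := by
    intro w w' hw'
    have h1 := le_trans (key w w' hw') hll
    simp only [ContinuousLinearMap.sub_apply, map_sub]
    linarith
  -- maximality: extend β (e u) at u by us
  have hmemu : us ∈ β (e u) u := by
    set γ : V → Set (StrongDual ℝ V) :=
      fun v => β (e u) v ∪ {x | v = u ∧ x = us} with hγ
    have hmono : MonotoneOp γ := by
      intro v w v' w' hv' hw'
      rcases hv' with hv' | ⟨rfl, rfl⟩ <;> rcases hw' with hw' | ⟨rfl, rfl⟩
      · exact (hmax (e u)).1 v w v' w' hv' hw'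
      · have := hrel v v' hv'
        simp only [ContinuousLinearMap.sub_apply, map_sub] at this ⊢
        linarith
      · exact hrel w w' hw'
      · simp
    have heq := (hmax (e u)).2 γ hmono (fun v => Set.subset_union_left) u
    rw [← heq]
    exact Or.inr ⟨rfl, rfl⟩
  refine ⟨hmemu, ?_⟩
  have h1 := key u us hmemu
  have hliminf : liminf a atTop = us u := le_antisymm hll (by linarith)
  have hlimsup : limsup a atTop = us u :=
    le_antisymm hls (hliminf ▸ liminf_le_limsup hbddA hbddB)
  exact tendsto_of_liminf_eq_limsup hliminf hlimsup hbddA hbddB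
end

section
/- For v in the space 𝒱 := {v ∈ L^p(0,T;V) : D_t v ∈ L^{p'}(0,T;V')} and the weight dμ(t) = (T-t)dt, there holds ∫₀ᵀ ⟨D_t v, v⟩ dμ(t) = (1/2)∫₀ᵀ ‖v(t)‖_H² dt − (T/2)‖v(0)‖_H². Consequently, on the affine subspace of functions with v(0) = u⁰ fixed, the time-derivative operator D_t: 𝒱_{μ,u⁰} ⊂ L^p_μ(0,T;V) → L^{p'}_μ(0,T;V') is monotone. -/
open Filter Topology intervalIntegral

lemma weighted_identity_aux
    {H : Type*} [NormedAddCommGroup H] [InnerProductSpace ℝ H] [CompleteSpace H]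
    (T : ℝ) (hT : 0 < T)
    (v : ℝ → H) (v' : ℝ → H)
    (hv : ∀ t ∈ Set.Icc (0 : ℝ) T, HasDerivAt v (v' t) t)
    (hv' : ContinuousOn v' (Set.Icc 0 T)) :
    (∫ t in (0 : ℝ)..T, (inner ℝ (v' t) (v t) : ℝ) * (T - t)) =
      (1 / 2) * (∫ t in (0 : ℝ)..T, ‖v t‖ ^ 2) - (T / 2) * ‖v 0‖ ^ 2 := by
  have hvc : ContinuousOn v (Set.Icc 0 T) := fun t ht =>
    (hv t ht).continuousAt.continuousWithinAt
  -- F t = (1/2) * ⟪v t, v t⟫ * (T - t)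
  set F : ℝ → ℝ := fun t => (1 / 2) * (inner ℝ (v t) (v t) : ℝ) * (T - t) with hF
  set F' : ℝ → ℝ := fun t => (inner ℝ (v' t) (v t) : ℝ) * (T - t)
      - (1 / 2) * (inner ℝ (v t) (v t) : ℝ) with hF'
  have hderiv : ∀ t ∈ Set.uIcc (0 : ℝ) T, HasDerivAt F (F' t) t := by
    intro t ht
    rw [Set.uIcc_of_le hT.le] at ht
    have h1 : HasDerivAt (fun t => (inner ℝ (v t) (v t) : ℝ))
        ((inner ℝ (v t) (v' t) : ℝ) + (inner ℝ (v' t) (v t) : ℝ)) t :=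
      (hv t ht).inner ℝ (hv t ht)
    have h2 : HasDerivAt (fun t : ℝ => T - t) (-1) t := by
      simpa using (hasDerivAt_id t).const_sub T
    have := ((h1.const_mul (1 / 2 : ℝ)).mul h2)
    convert this using 1
    · rfl
    · rfl
    · rfl
    have : (inner ℝ (v t) (v' t) : ℝ) = (inner ℝ (v' t) (v t) : ℝ) := real_inner_comm _ _
    simp only [hF', this]
    ring
  have hFi : IntervalIntegrable F' MeasureTheory.volume 0 T := by
    apply ContinuousOn.intervalIntegrable
    rw [Set.uIcc_of_le hT.le]
    exact ((ContinuousOn.inner hv' hvc).mul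
      (continuousOn_const.sub continuousOn_id)).sub
      (continuousOn_const.mul (ContinuousOn.inner hvc hvc))
  have key := intervalIntegral.integral_eq_sub_of_hasDerivAt hderiv hFi
  have h1 : IntervalIntegrable (fun t => (inner ℝ (v' t) (v t) : ℝ) * (T - t))
      MeasureTheory.volume 0 T := by
    apply ContinuousOn.intervalIntegrable
    rw [Set.uIcc_of_le hT.le]
    exact (ContinuousOn.inner hv' hvc).mul (continuousOn_const.sub continuousOn_id)
  have h2 : IntervalIntegrable (fun t => (1 / 2) * (inner ℝ (v t) (v t) : ℝ))
      MeasureTheory.volume 0 T := by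
    apply ContinuousOn.intervalIntegrable
    rw [Set.uIcc_of_le hT.le]
    exact continuousOn_const.mul (ContinuousOn.inner hvc hvc)
  rw [show F' = fun t => (inner ℝ (v' t) (v t) : ℝ) * (T - t)
      - (1 / 2) * (inner ℝ (v t) (v t) : ℝ) from rfl,
    intervalIntegral.integral_sub h1 h2] at key
  have hnorm : ∀ t : ℝ, (inner ℝ (v t) (v t) : ℝ) = ‖v t‖ ^ 2 := fun t =>
    real_inner_self_eq_norm_sq (v t)
  simp only [hF, hnorm, sub_self, mul_zero, zero_mul, sub_zero] at key
  rw [intervalIntegral.integral_const_mul] at key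
  linarith [key]

/-- for a flow `v` with values in the Hilbert pivot space `H` and the
weight `dμ(t) = (T-t)dt`, one has
`∫₀ᵀ ⟨D_t v, v⟩ (T-t) dt = (1/2)∫₀ᵀ ‖v(t)‖² dt − (T/2)‖v(0)‖²`; consequently, on the
set of flows with the same initial value, the time derivative is a monotone operator. -/
theorem weighted_derivative_identity_and_monotonicity
    (H : Type*) [NormedAddCommGroup H] [InnerProductSpace ℝ H] [CompleteSpace H]
    (T : ℝ) (hT : 0 < T)
    (v w : ℝ → H) (v' w' : ℝ → H)
    (hv : ∀ t ∈ Set.Icc (0 : ℝ) T, HasDerivAt v (v' t) t)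
    (hw : ∀ t ∈ Set.Icc (0 : ℝ) T, HasDerivAt w (w' t) t)
    (hv' : ContinuousOn v' (Set.Icc 0 T))
    (hw' : ContinuousOn w' (Set.Icc 0 T))
    (hinit : w 0 = v 0) :
    (∫ t in (0 : ℝ)..T, (inner ℝ (v' t) (v t) : ℝ) * (T - t)) =
      (1 / 2) * (∫ t in (0 : ℝ)..T, ‖v t‖ ^ 2) - (T / 2) * ‖v 0‖ ^ 2 ∧
    0 ≤ ∫ t in (0 : ℝ)..T, (inner ℝ (v' t - w' t) (v t - w t) : ℝ) * (T - t) := by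
  constructor
  · exact weighted_identity_aux T hT v v' hv hv'
  · have hu : ∀ t ∈ Set.Icc (0 : ℝ) T,
        HasDerivAt (fun t => v t - w t) (v' t - w' t) t := fun t ht =>
      (hv t ht).sub (hw t ht)
    have hu' : ContinuousOn (fun t => v' t - w' t) (Set.Icc 0 T) := hv'.sub hw'
    have key := weighted_identity_aux T hT (fun t => v t - w t)
      (fun t => v' t - w' t) hu hu'
    simp only [hinit, sub_self, norm_zero] at key
    rw [key]
    have : 0 ≤ ∫ t in (0 : ℝ)..T, ‖v t - w t‖ ^ 2 :=
      intervalIntegral.integral_nonneg hT.le (fun t _ => sq_nonneg _)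
    simp only [ne_eq, OfNat.ofNat_ne_zero, not_false_eq_true, zero_pow, mul_zero, sub_zero]
    positivity
end
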